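/- arXiv:2110.05818 — 3 statements merged into one kernel-verified Lean document; each statement's English description precedes it below -/
import Mathlib

section
/- Suppose 𝔨 is maximal among toral subalgebras over 𝔥, i.e. every Lie subalgebra 𝔨' of 𝔤 with 𝔨 ⊆ 𝔨' and [𝔨',𝔨'] ⊆ 𝔥 satisfies 𝔨' = 𝔨. Then the only element X ∈ 𝔫 satisfying [k, X] = 0 for all k ∈ 𝔨 is X = 0; in particular, 𝔫 contains no nonzero subspace on which ad(𝔨) acts trivially. -/
open scoped RealInnerProductSpace

noncomputable section

variable {G : Type*} [NormedAddCommGroup G] [InnerProductSpace ℝ G] [FiniteDimensional ℝ G]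

/-- Orthogonal projection onto the subspace `W`, as a plain map `G → G`. -/
def pr (W : Submodule ℝ G) : G → G := fun v => (W.orthogonalProjectionOnto v : G)

/-- Orthogonal projection onto the subspace `W`, as a continuous linear endomorphism of `G`. -/
def projL (W : Submodule ℝ G) : G →L[ℝ] G := W.subtypeL.comp (W.orthogonalProjectionOnto)

variable (br : G →ₗ[ℝ] G →ₗ[ℝ] G)

/-- `br` is a Lie bracket making `G` a real Lie algebra, and the inner product `Q` of `G`
is ad-invariant: `Q([Z,X],Y) + Q(X,[Z,Y]) = 0`. -/
structure IsLieQ : Prop where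
  alt : ∀ x : G, br x x = 0
  jacobi : ∀ x y z : G, br x (br y z) + br y (br z x) + br z (br x y) = 0
  adInv : ∀ Z X Y : G, ⟪br Z X, Y⟫ + ⟪X, br Z Y⟫ = 0

/-- `𝔥 ⊆ 𝔨` are Lie subalgebras of `𝔤` with `[𝔨,𝔨] ⊆ 𝔥`. -/
structure IsToralPair (𝔥 𝔨 : Submodule ℝ G) : Prop where
  subalg_h : ∀ x ∈ 𝔥, ∀ y ∈ 𝔥, br x y ∈ 𝔥
  subalg_k : ∀ x ∈ 𝔨, ∀ y ∈ 𝔨, br x y ∈ 𝔨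
  h_le_k : 𝔥 ≤ 𝔨
  bk_in_h : ∀ x ∈ 𝔨, ∀ y ∈ 𝔨, br x y ∈ 𝔥

/-- if `𝔨` is maximal among toral subalgebras over `𝔥` (every Lie subalgebra
`𝔨'` of `𝔤` with `𝔨 ⊆ 𝔨'` and `[𝔨',𝔨'] ⊆ 𝔥` satisfies `𝔨' = 𝔨`), then the only element
`X ∈ 𝔫 = 𝔨ᗮ` satisfying `[k, X] = 0` for all `k ∈ 𝔨` is `X = 0`. -/
theorem maximal_toral_no_trivial_submodule
    (hLie : IsLieQ br) (𝔥 𝔨 : Submodule ℝ G) (hpair : IsToralPair br 𝔥 𝔨)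
    (hmax : ∀ 𝔨' : Submodule ℝ G, (∀ x ∈ 𝔨', ∀ y ∈ 𝔨', br x y ∈ 𝔨') →
      𝔨 ≤ 𝔨' → (∀ x ∈ 𝔨', ∀ y ∈ 𝔨', br x y ∈ 𝔥) → 𝔨' = 𝔨)
    (X : G) (hX : X ∈ 𝔨ᗮ) (hcomm : ∀ k ∈ 𝔨, br k X = 0) :
    X = 0 := by
  have antisymm : ∀ a b : G, br a b = - br b a := by
    intro a b
    have h := hLie.alt (a + b)
    simp only [map_add, LinearMap.add_apply, hLie.alt, zero_add, add_zero] at h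
    exact eq_neg_of_add_eq_zero_right h
  have hXk : X ∈ 𝔨 := by
    set 𝔨' := 𝔨 ⊔ Submodule.span ℝ {X} with h𝔨'
    have hmem : ∀ z ∈ 𝔨', ∃ k ∈ 𝔨, ∃ c : ℝ, z = k + c • X := by
      intro z hz
      rw [h𝔨', Submodule.mem_sup] at hz
      obtain ⟨k, hk, s, hs, rfl⟩ := hz
      obtain ⟨c, rfl⟩ := Submodule.mem_span_singleton.mp hs
      exact ⟨k, hk, c, rfl⟩
    have hbr : ∀ a ∈ 𝔨', ∀ b ∈ 𝔨', br a b ∈ 𝔥 := by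
      intro a ha b hb
      obtain ⟨k1, hk1, c, rfl⟩ := hmem a ha
      obtain ⟨k2, hk2, d, rfl⟩ := hmem b hb
      have hXX : br X X = 0 := hLie.alt X
      have h1 : br k1 X = 0 := hcomm k1 hk1
      have h2 : br X k2 = 0 := by rw [antisymm]; rw [hcomm k2 hk2]; simp
      have : br (k1 + c • X) (k2 + d • X) = br k1 k2 := by
        simp [map_add, map_smul, h1, h2, hXX]
      rw [this]
      exact hpair.bk_in_h k1 hk1 k2 hk2
    have hsub : ∀ a ∈ 𝔨', ∀ b ∈ 𝔨', br a b ∈ 𝔨' := by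
      intro a ha b hb
      exact Submodule.mem_sup_left (hpair.h_le_k (hbr a ha b hb))
    have heq : 𝔨' = 𝔨 := hmax 𝔨' hsub le_sup_left hbr
    have : X ∈ 𝔨' := Submodule.mem_sup_right (Submodule.mem_span_singleton_self X)
    rwa [heq] at this
  have := hX X hXk
  have : ⟪X, X⟫ = 0 := by rwa [real_inner_comm] at this
  exact inner_self_eq_zero.mp this
end
end

section
/- Assume that no nonzero X ∈ 𝔫 satisfies [k, X] = 0 for all k ∈ 𝔨. Let P_𝔫 be a Q-symmetric positive-definite endomorphism of 𝔫 commuting with ad(k)|_𝔫 for every k ∈ 𝔨, and let B_𝔱 be a Q-symmetric endomorphism of 𝔱. Then the derivative at s = 0 of the curve s ↦ Ric((s·B_𝔱) ⊕ P_𝔫) of extended Ricci endomorphisms annihilates 𝔱: (d/ds|_{s=0} Ric((s·B_𝔱) ⊕ P_𝔫)).T = 0 for every T ∈ 𝔱. -/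
open scoped RealInnerProductSpace

noncomputable section

variable {G : Type*} [NormedAddCommGroup G] [InnerProductSpace ℝ G] [FiniteDimensional ℝ G]

variable (br : G →ₗ[ℝ] G →ₗ[ℝ] G)

/-- no nonzero element of `𝔫 = 𝔨ᗮ` commutes with all of `𝔨`. -/
def NoTrivial (𝔨 : Submodule ℝ G) : Prop :=
  ∀ X ∈ 𝔨ᗮ, (∀ k ∈ 𝔨, br k X = 0) → X = 0

/-- `A` maps `W` into itself and is `Q`-symmetric on `W`. -/
def SymOn (W : Submodule ℝ G) (A : G →L[ℝ] G) : Prop :=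
  (∀ v ∈ W, A v ∈ W) ∧ ∀ v ∈ W, ∀ w ∈ W, ⟪A v, w⟫ = ⟪v, A w⟫

/-- `A` is positive definite on the subspace `W`. -/
def PosDefOn (W : Submodule ℝ G) (A : G →L[ℝ] G) : Prop :=
  ∀ v ∈ W, v ≠ 0 → 0 < ⟪A v, v⟫

/-- `A` commutes with `ad(k)|_𝔫` on `𝔫 = 𝔨ᗮ`, for every `k ∈ 𝔨`. -/
def CommAd (𝔨 : Submodule ℝ G) (A : G →L[ℝ] G) : Prop :=
  ∀ k ∈ 𝔨, ∀ X ∈ 𝔨ᗮ, A (br k X) = br k (A X)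

/-- `Ainv` maps `W` to itself and is a two-sided inverse of `A` on the subspace `W`. -/
def InvOn' (W : Submodule ℝ G) (A Ainv : G →L[ℝ] G) : Prop :=
  (∀ v ∈ W, Ainv v ∈ W) ∧ (∀ v ∈ W, Ainv (A v) = v) ∧ (∀ v ∈ W, A (Ainv v) = v)

/-- The explicit formula for the extended operator `S(P)(V).W` of the generalized submersion
metric `P = P_𝔱 ⊕ P_𝔫`, where `𝔱 = 𝔨 ⊓ 𝔥ᗮ`, `𝔪 = 𝔥ᗮ`, `𝔫 = 𝔨ᗮ`:
`S(P)(T).T' = 0`, `S(P)(T).Y = -[T,Y] + (1/2) P_𝔫⁻¹.[P_𝔱.T, Y]`,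
`S(P)(X).T' = -(1/2) P_𝔫⁻¹.[X, P_𝔱.T']`,
`S(P)(X).Y = -(1/2)[X,Y]_𝔪 - (1/2) P_𝔫⁻¹.(([X,P_𝔫.Y])_𝔫 - ([P_𝔫.X,Y])_𝔫)`. -/
def Sfun (𝔥 𝔨 : Submodule ℝ G) (pt pn pninv : G →L[ℝ] G) (V W : G) : G :=
  -(br (pr (𝔨 ⊓ 𝔥ᗮ) V) (pr 𝔨ᗮ W)) + (2⁻¹ : ℝ) • pninv (br (pt (pr (𝔨 ⊓ 𝔥ᗮ) V)) (pr 𝔨ᗮ W))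
    - (2⁻¹ : ℝ) • pninv (br (pr 𝔨ᗮ V) (pt (pr (𝔨 ⊓ 𝔥ᗮ) W)))
    - (2⁻¹ : ℝ) • pr 𝔥ᗮ (br (pr 𝔨ᗮ V) (pr 𝔨ᗮ W))
    - (2⁻¹ : ℝ) • pninv (pr 𝔨ᗮ (br (pr 𝔨ᗮ V) (pn (pr 𝔨ᗮ W)))
        - pr 𝔨ᗮ (br (pn (pr 𝔨ᗮ V)) (pr 𝔨ᗮ W)))

/-- The extended curvature `Rm(P)(V₁,V₂).W` of the generalized submersion metric
`P = P_𝔱 ⊕ P_𝔫`: `Rm(P)(V₁,V₂) = ad([V₁,V₂]_𝔥)|_𝔪 - [S(P)(V₁),S(P)(V₂)] - S(P)([V₁,V₂]_𝔪)`. -/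
def Rmfun (𝔥 𝔨 : Submodule ℝ G) (pt pn pninv : G →L[ℝ] G) (V₁ V₂ W : G) : G :=
  br (pr 𝔥 (br V₁ V₂)) W
    - (Sfun br 𝔥 𝔨 pt pn pninv V₁ (Sfun br 𝔥 𝔨 pt pn pninv V₂ W)
        - Sfun br 𝔥 𝔨 pt pn pninv V₂ (Sfun br 𝔥 𝔨 pt pn pninv V₁ W))
    - Sfun br 𝔥 𝔨 pt pn pninv (pr 𝔥ᗮ (br V₁ V₂)) W

/-- `Tr (𝔪 ∋ Z ↦ Rm(P)(V₁, Z).V₂)`, computed via an orthonormal basis of `𝔪 = 𝔥ᗮ`. -/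
def RicBilin (𝔥 𝔨 : Submodule ℝ G) (pt pn pninv : G →L[ℝ] G) (V₁ V₂ : G) : ℝ :=
  ∑ i, ⟪((stdOrthonormalBasis ℝ 𝔥ᗮ) i : G),
        Rmfun br 𝔥 𝔨 pt pn pninv V₁ ((stdOrthonormalBasis ℝ 𝔥ᗮ) i : G) V₂⟫

/-- `Ric` is the extended Ricci endomorphism of the generalized submersion metric
`P = P_𝔱 ⊕ P_𝔫`: it maps `𝔪 = 𝔥ᗮ` to `𝔪`, vanishes on `𝔪ᗮ`, and satisfies
`Q(Ric.V₁, V₂) = Tr(𝔪 ∋ Z ↦ Rm(P)(V₁,Z).V₂)` for all `V₁, V₂ ∈ 𝔪`. -/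
def IsExtRic (𝔥 𝔨 : Submodule ℝ G) (pt pn pninv Ric : G →L[ℝ] G) : Prop :=
  Ric = (projL 𝔥ᗮ).comp (Ric.comp (projL 𝔥ᗮ)) ∧
  ∀ V₁ ∈ 𝔥ᗮ, ∀ V₂ ∈ 𝔥ᗮ, ⟪Ric V₁, V₂⟫ = RicBilin br 𝔥 𝔨 pt pn pninv V₁ V₂

/-- `SN` is the operator `S_N(P_𝔫)` of the base space `N`, relative to the reductive
decomposition `𝔤 = 𝔨 ⊕ 𝔫`, defined by the implicit equation
`-2 Q(S_N(X).Y, Z) = Q([X,Y]_𝔫, Z) + Q([P_𝔫⁻¹.Z, X]_𝔫, P_𝔫.Y) + Q([P_𝔫⁻¹.Z, Y]_𝔫, P_𝔫.X)`. -/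
def IsSN (𝔨 : Submodule ℝ G) (pn pninv : G →L[ℝ] G) (SN : G → G → G) : Prop :=
  (∀ X ∈ 𝔨ᗮ, ∀ Y ∈ 𝔨ᗮ, SN X Y ∈ 𝔨ᗮ) ∧
  ∀ X ∈ 𝔨ᗮ, ∀ Y ∈ 𝔨ᗮ, ∀ Z ∈ 𝔨ᗮ,
    (-2 : ℝ) * ⟪SN X Y, Z⟫ =
      ⟪pr 𝔨ᗮ (br X Y), Z⟫ + ⟪pr 𝔨ᗮ (br (pninv Z) X), pn Y⟫ + ⟪pr 𝔨ᗮ (br (pninv Z) Y), pn X⟫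

/-- The curvature `Rm_N(P_𝔫)(X,Y).W` of the base space `N`:
`Rm_N(X,Y) = ad([X,Y]_𝔨)|_𝔫 - [S_N(X),S_N(Y)] - S_N([X,Y]_𝔫)`. -/
def RmNfun (𝔨 : Submodule ℝ G) (SN : G → G → G) (X Y W : G) : G :=
  br (pr 𝔨 (br X Y)) W - (SN X (SN Y W) - SN Y (SN X W)) - SN (pr 𝔨ᗮ (br X Y)) W

/-- `RicN` is the Ricci endomorphism `Ric_N(P_𝔫)` of the base space `N`, relative to the
operator `SN = S_N(P_𝔫)`: it maps `𝔫 = 𝔨ᗮ` to `𝔫`, vanishes on `𝔫ᗮ`, and satisfies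
`Q(RicN.X, Y) = Tr(𝔫 ∋ Z ↦ Rm_N(X,Z).Y)` for all `X, Y ∈ 𝔫`. -/
def IsBaseRic (𝔨 : Submodule ℝ G) (SN : G → G → G) (RicN : G →L[ℝ] G) : Prop :=
  RicN = (projL 𝔨ᗮ).comp (RicN.comp (projL 𝔨ᗮ)) ∧
  ∀ X ∈ 𝔨ᗮ, ∀ Y ∈ 𝔨ᗮ,
    ⟪RicN X, Y⟫ = ∑ i, ⟪((stdOrthonormalBasis ℝ 𝔨ᗮ) i : G),
      RmNfun br 𝔨 SN X ((stdOrthonormalBasis ℝ 𝔨ᗮ) i : G) Y⟫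


/-! ### Auxiliary lemmas -/

section Aux

variable {G : Type*} [NormedAddCommGroup G] [InnerProductSpace ℝ G] [FiniteDimensional ℝ G]

set_option linter.unusedSectionVars false

lemma pr_mem (W : Submodule ℝ G) (v : G) : pr W v ∈ W := SetLike.coe_mem _

lemma pr_self {W : Submodule ℝ G} {v : G} (h : v ∈ W) : pr W v = v :=
  Submodule.starProjection_eq_self_iff.2 h

lemma pr_zero' {W : Submodule ℝ G} {v : G} (h : v ∈ Wᗮ) : pr W v = 0 := by
  simp [pr, Submodule.orthogonalProjectionOnto_apply_of_mem_orthogonal h]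

lemma pr_adj (W : Submodule ℝ G) (u v : G) : ⟪pr W u, v⟫ = ⟪u, pr W v⟫ :=
  Submodule.inner_starProjection_left_eq_right W u v

@[simp] lemma pr_add (W : Submodule ℝ G) (x y : G) : pr W (x + y) = pr W x + pr W y := by
  simp [pr]

@[simp] lemma pr_smul (W : Submodule ℝ G) (c : ℝ) (x : G) : pr W (c • x) = c • pr W x := by
  simp [pr]

@[simp] lemma pr_zero (W : Submodule ℝ G) : pr W (0 : G) = 0 := by simp [pr]

@[simp] lemma pr_neg (W : Submodule ℝ G) (x : G) : pr W (-x) = -pr W x := by simp [pr]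

@[simp] lemma pr_sub (W : Submodule ℝ G) (x y : G) : pr W (x - y) = pr W x - pr W y := by
  simp [pr]

lemma inner_pr_right_of_mem {W : Submodule ℝ G} {u : G} (hu : u ∈ W) (v : G) :
    ⟪u, pr W v⟫ = ⟪u, v⟫ := by
  rw [← pr_adj, pr_self hu]

lemma inner_pr_left_of_mem {W : Submodule ℝ G} {v : G} (hv : v ∈ W) (u : G) :
    ⟪pr W u, v⟫ = ⟪u, v⟫ := by
  rw [pr_adj, pr_self hv]

lemma pr_pr_of_le {U V : Submodule ℝ G} (h : U ≤ V) (x : G) : pr U (pr V x) = pr U x := by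
  apply ext_inner_right ℝ
  intro v
  rw [pr_adj, pr_adj U x]
  exact inner_pr_left_of_mem (h (pr_mem U v)) x

variable {br : G →ₗ[ℝ] G →ₗ[ℝ] G} {𝔥 𝔨 : Submodule ℝ G}

lemma br_inner (hLie : IsLieQ br) (z x y : G) : ⟪br z x, y⟫ = -⟪x, br z y⟫ := by
  have := hLie.adInv z x y; linarith

lemma inner_br (hLie : IsLieQ br) (z x y : G) : ⟪x, br z y⟫ = -⟪br z x, y⟫ := by
  have := hLie.adInv z x y; linarith

lemma br_skew (hLie : IsLieQ br) (x y : G) : br x y = -br y x := by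
  have h := hLie.alt (x + y)
  simp only [map_add, LinearMap.add_apply, hLie.alt x, hLie.alt y, zero_add, add_zero] at h
  exact eq_neg_of_add_eq_zero_left (by rw [add_comm]; exact h)

lemma br_leibniz (hLie : IsLieQ br) (k a b : G) :
    br k (br a b) = br (br k a) b + br a (br k b) := by
  have h := hLie.jacobi k a b
  have h1 : br a (br b k) = -br a (br k b) := by
    rw [br_skew hLie b k, map_neg]
  have h2 : br b (br k a) = -br (br k a) b := by
    rw [br_skew hLie b (br k a)]
  rw [h1, h2] at h
  have : br k (br a b) - br a (br k b) - br (br k a) b = 0 := by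
    rw [← h]; abel
  have := sub_eq_zero.mp (by rw [← this]; abel : br k (br a b) - (br (br k a) b + br a (br k b)) = 0)
  exact this

lemma br_mem_k (hpair : IsToralPair br 𝔥 𝔨) {k x : G} (hk : k ∈ 𝔨) (hx : x ∈ 𝔨) :
    br k x ∈ 𝔨 := hpair.subalg_k k hk x hx

lemma br_k_n (hLie : IsLieQ br) (hpair : IsToralPair br 𝔥 𝔨) {k x : G}
    (hk : k ∈ 𝔨) (hx : x ∈ 𝔨ᗮ) : br k x ∈ 𝔨ᗮ := by
  rw [Submodule.mem_orthogonal]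
  intro u hu
  rw [inner_br hLie]
  rw [(Submodule.mem_orthogonal 𝔨 x).1 hx _ (hpair.subalg_k k hk u hu), neg_zero]

lemma br_n_k (hLie : IsLieQ br) (hpair : IsToralPair br 𝔥 𝔨) {k x : G}
    (hk : k ∈ 𝔨) (hx : x ∈ 𝔨ᗮ) : br x k ∈ 𝔨ᗮ := by
  rw [br_skew hLie]
  exact Submodule.neg_mem _ (br_k_n hLie hpair hk hx)

lemma t_le_k : 𝔨 ⊓ 𝔥ᗮ ≤ 𝔨 := inf_le_left

lemma t_le_m : 𝔨 ⊓ 𝔥ᗮ ≤ 𝔥ᗮ := inf_le_right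

lemma n_le_m (hpair : IsToralPair br 𝔥 𝔨) : 𝔨ᗮ ≤ 𝔥ᗮ :=
  Submodule.orthogonal_le hpair.h_le_k

lemma n_le_t_orth : 𝔨ᗮ ≤ (𝔨 ⊓ 𝔥ᗮ)ᗮ := Submodule.orthogonal_le inf_le_left

lemma k_le_n_orth {v : G} (hv : v ∈ 𝔨) : v ∈ 𝔨ᗮᗮ :=
  Submodule.le_orthogonal_orthogonal 𝔨 hv

/-- `𝔱 = 𝔨 ⊓ 𝔥ᗮ` is central in `𝔨`. -/
lemma br_central (hLie : IsLieQ br) (hpair : IsToralPair br 𝔥 𝔨) {k t : G}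
    (hk : k ∈ 𝔨) (ht : t ∈ 𝔨 ⊓ 𝔥ᗮ) : br k t = 0 := by
  have h1 : br k t ∈ 𝔥 := hpair.bk_in_h k hk t ht.1
  have h2 : ∀ h' ∈ 𝔥, ⟪br k t, h'⟫ = 0 := by
    intro h' hh'
    rw [br_inner hLie]
    have : ⟪t, br k h'⟫ = 0 := by
      rw [real_inner_comm]
      exact (Submodule.mem_orthogonal 𝔥 t).1 ht.2 _
        (hpair.bk_in_h k hk h' (hpair.h_le_k hh'))
    rw [this, neg_zero]

  have := h2 _ h1
  rwa [inner_self_eq_zero] at this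

/-- Orthogonal splitting of `𝔪 = 𝔥ᗮ` into `𝔱 ⊕ 𝔫`. -/
lemma m_split (hpair : IsToralPair br 𝔥 𝔨) {v : G} (hv : v ∈ 𝔥ᗮ) :
    pr (𝔨 ⊓ 𝔥ᗮ) v + pr 𝔨ᗮ v = v := by
  set d := v - pr (𝔨 ⊓ 𝔥ᗮ) v - pr 𝔨ᗮ v with hd
  have dk : d ∈ 𝔨 := by
    have h1 : v - pr 𝔨ᗮ v ∈ 𝔨ᗮᗮ := Submodule.sub_starProjection_mem_orthogonal v
    rw [Submodule.orthogonal_orthogonal] at h1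
    have : d = (v - pr 𝔨ᗮ v) - pr (𝔨 ⊓ 𝔥ᗮ) v := by rw [hd]; abel
    rw [this]
    exact Submodule.sub_mem _ h1 (t_le_k (pr_mem _ v))
  have dh : d ∈ 𝔥ᗮ := by
    apply Submodule.sub_mem _ (Submodule.sub_mem _ hv (t_le_m (pr_mem _ v)))
      (n_le_m hpair (pr_mem _ v))
  have dt : d ∈ (𝔨 ⊓ 𝔥ᗮ)ᗮ := by
    have h1 : v - pr (𝔨 ⊓ 𝔥ᗮ) v ∈ (𝔨 ⊓ 𝔥ᗮ)ᗮ := Submodule.sub_starProjection_mem_orthogonal v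
    have : d = (v - pr (𝔨 ⊓ 𝔥ᗮ) v) - pr 𝔨ᗮ v := by rw [hd]
    rw [this]
    exact Submodule.sub_mem _ h1 (n_le_t_orth (pr_mem _ v))
  have dzero : d = 0 := by
    have hdt : d ∈ 𝔨 ⊓ 𝔥ᗮ := ⟨dk, dh⟩
    have := (Submodule.mem_orthogonal _ d).1 dt d hdt
    rwa [inner_self_eq_zero] at this
  have : v - (pr (𝔨 ⊓ 𝔥ᗮ) v + pr 𝔨ᗮ v) = 0 := by rw [← dzero, hd]; abel
  have h2 := sub_eq_zero.mp this
  exact h2.symm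

lemma pninv_sym {pn pninv : G →L[ℝ] G} (hpn : SymOn 𝔨ᗮ pn) (hpninv : InvOn' 𝔨ᗮ pn pninv)
    {x y : G} (hx : x ∈ 𝔨ᗮ) (hy : y ∈ 𝔨ᗮ) : ⟪pninv x, y⟫ = ⟪x, pninv y⟫ := by
  calc ⟪pninv x, y⟫ = ⟪pninv x, pn (pninv y)⟫ := by rw [hpninv.2.2 y hy]
    _ = ⟪pn (pninv x), pninv y⟫ :=
        (hpn.2 (pninv x) (hpninv.1 x hx) (pninv y) (hpninv.1 y hy)).symm
    _ = ⟪x, pninv y⟫ := by rw [hpninv.2.2 x hx]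

lemma pninv_br_k (hLie : IsLieQ br) (hpair : IsToralPair br 𝔥 𝔨) {pn pninv : G →L[ℝ] G}
    (hpncomm : CommAd br 𝔨 pn) (hpninv : InvOn' 𝔨ᗮ pn pninv)
    {k x : G} (hk : k ∈ 𝔨) (hx : x ∈ 𝔨ᗮ) : pninv (br k x) = br k (pninv x) := by
  have h1 : pninv x ∈ 𝔨ᗮ := hpninv.1 x hx
  conv_lhs => rw [← hpninv.2.2 x hx, ← hpncomm k hk (pninv x) h1]
  rw [hpninv.2.1 _ (br_k_n hLie hpair hk h1)]

/-- Expansion of a member of `W` in an orthonormal basis of `W`. -/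
lemma onb_expand (W : Submodule ℝ G) {x : G} (hx : x ∈ W) :
    ∑ j, ⟪x, ((stdOrthonormalBasis ℝ W) j : G)⟫ • ((stdOrthonormalBasis ℝ W) j : G) = x := by
  set b := stdOrthonormalBasis ℝ W with hb
  have h := congrArg (Submodule.subtype W) (b.sum_repr ⟨x, hx⟩)
  simp only [map_sum, map_smul, Submodule.subtype_apply] at h
  conv_rhs => rw [← h]
  refine Finset.sum_congr rfl fun j _ => ?_
  have h2 : b.repr ⟨x, hx⟩ j = ⟪(b j : G), x⟫ := b.repr_apply_apply _ _
  rw [h2, real_inner_comm]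

lemma onb_inner_mul (W : Submodule ℝ G) {x : G} (hx : x ∈ W) (y : G) :
    ∑ i, ⟪x, ((stdOrthonormalBasis ℝ W) i : G)⟫ * ⟪((stdOrthonormalBasis ℝ W) i : G), y⟫
      = ⟪x, y⟫ := by
  conv_rhs => rw [← onb_expand W hx]
  rw [sum_inner]
  simp [real_inner_smul_left]

lemma split_aux {W : Submodule ℝ G} (hsub : W ≤ 𝔥ᗮ) (M : G →ₗ[ℝ] G) :
    ∑ i, ⟪((stdOrthonormalBasis ℝ 𝔥ᗮ) i : G), M (pr W ((stdOrthonormalBasis ℝ 𝔥ᗮ) i : G))⟫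
      = ∑ a, ⟪((stdOrthonormalBasis ℝ W) a : G), M ((stdOrthonormalBasis ℝ W) a : G)⟫ := by
  set e := stdOrthonormalBasis ℝ 𝔥ᗮ with he
  set b := stdOrthonormalBasis ℝ W with hb
  have step : ∀ i, ⟪(e i : G), M (pr W (e i : G))⟫
      = ∑ a, ⟪(b a : G), (e i : G)⟫ * ⟪(e i : G), M (b a : G)⟫ := by
    intro i
    conv_lhs => rw [← onb_expand W (pr_mem W (e i : G))]
    rw [map_sum, inner_sum]
    refine Finset.sum_congr rfl fun a _ => ?_
    rw [map_smul, real_inner_smul_right]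
    congr 1
    rw [pr_adj, pr_self (SetLike.coe_mem (b a)), real_inner_comm]
  calc ∑ i, ⟪(e i : G), M (pr W (e i : G))⟫
      = ∑ i, ∑ a, ⟪(b a : G), (e i : G)⟫ * ⟪(e i : G), M (b a : G)⟫ :=
        Finset.sum_congr rfl fun i _ => step i
    _ = ∑ a, ∑ i, ⟪(b a : G), (e i : G)⟫ * ⟪(e i : G), M (b a : G)⟫ := Finset.sum_comm
    _ = ∑ a, ⟪(b a : G), M (b a : G)⟫ :=
        Finset.sum_congr rfl fun a _ => onb_inner_mul 𝔥ᗮ (hsub (SetLike.coe_mem (b a))) _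

/-- Splitting of the trace over `𝔪 = 𝔥ᗮ` into traces over `𝔱` and `𝔫`. -/
lemma split_trace (hpair : IsToralPair br 𝔥 𝔨) (M : G →ₗ[ℝ] G) :
    ∑ i, ⟪((stdOrthonormalBasis ℝ 𝔥ᗮ) i : G), M ((stdOrthonormalBasis ℝ 𝔥ᗮ) i : G)⟫
      = (∑ a, ⟪((stdOrthonormalBasis ℝ ↥(𝔨 ⊓ 𝔥ᗮ)) a : G),
            M ((stdOrthonormalBasis ℝ ↥(𝔨 ⊓ 𝔥ᗮ)) a : G)⟫)
        + ∑ j, ⟪((stdOrthonormalBasis ℝ 𝔨ᗮ) j : G), M ((stdOrthonormalBasis ℝ 𝔨ᗮ) j : G)⟫ := by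
  have h1 : ∀ i, ⟪((stdOrthonormalBasis ℝ 𝔥ᗮ) i : G), M ((stdOrthonormalBasis ℝ 𝔥ᗮ) i : G)⟫
      = ⟪((stdOrthonormalBasis ℝ 𝔥ᗮ) i : G), M (pr (𝔨 ⊓ 𝔥ᗮ) ((stdOrthonormalBasis ℝ 𝔥ᗮ) i : G))⟫
        + ⟪((stdOrthonormalBasis ℝ 𝔥ᗮ) i : G), M (pr 𝔨ᗮ ((stdOrthonormalBasis ℝ 𝔥ᗮ) i : G))⟫ := by
    intro i
    have hm := m_split hpair (SetLike.coe_mem ((stdOrthonormalBasis ℝ 𝔥ᗮ) i))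
    conv_lhs => rw [← hm]
    rw [map_add, inner_add_right, hm]
  rw [Finset.sum_congr rfl fun i _ => h1 i, Finset.sum_add_distrib,
    split_aux (t_le_m (𝔥 := 𝔥) (𝔨 := 𝔨)) M, split_aux (n_le_m hpair) M]

/-- The `s`-independent part of `Sfun` with `pt = s • Bt`. -/
def aS0 (br : G →ₗ[ℝ] G →ₗ[ℝ] G) (𝔥 𝔨 : Submodule ℝ G) (pn pninv : G →L[ℝ] G) (V W : G) : G :=
  -(br (pr (𝔨 ⊓ 𝔥ᗮ) V) (pr 𝔨ᗮ W)) - (2⁻¹ : ℝ) • pr 𝔥ᗮ (br (pr 𝔨ᗮ V) (pr 𝔨ᗮ W))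
    - (2⁻¹ : ℝ) • pninv (pr 𝔨ᗮ (br (pr 𝔨ᗮ V) (pn (pr 𝔨ᗮ W)))
        - pr 𝔨ᗮ (br (pn (pr 𝔨ᗮ V)) (pr 𝔨ᗮ W)))

/-- The coefficient of `s` in `Sfun` with `pt = s • Bt`. -/
def aS1 (br : G →ₗ[ℝ] G →ₗ[ℝ] G) (𝔥 𝔨 : Submodule ℝ G) (Bt : G →L[ℝ] G)
    (pninv : G →L[ℝ] G) (V W : G) : G :=
  (2⁻¹ : ℝ) • pninv (br (Bt (pr (𝔨 ⊓ 𝔥ᗮ) V)) (pr 𝔨ᗮ W))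
    - (2⁻¹ : ℝ) • pninv (br (pr 𝔨ᗮ V) (Bt (pr (𝔨 ⊓ 𝔥ᗮ) W)))

lemma Sfun_decomp (br : G →ₗ[ℝ] G →ₗ[ℝ] G) (𝔥 𝔨 : Submodule ℝ G)
    (Bt pn pninv : G →L[ℝ] G) (s : ℝ) (V W : G) :
    Sfun br 𝔥 𝔨 (s • Bt) pn pninv V W
      = aS0 br 𝔥 𝔨 pn pninv V W + s • aS1 br 𝔥 𝔨 Bt pninv V W := by
  simp only [Sfun, aS0, aS1, ContinuousLinearMap.smul_apply, map_smul, LinearMap.smul_apply]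
  module

lemma aS0_add₂ (br : G →ₗ[ℝ] G →ₗ[ℝ] G) (𝔥 𝔨 : Submodule ℝ G) (pn pninv : G →L[ℝ] G)
    (V x y : G) : aS0 br 𝔥 𝔨 pn pninv V (x + y)
      = aS0 br 𝔥 𝔨 pn pninv V x + aS0 br 𝔥 𝔨 pn pninv V y := by
  simp only [aS0, pr_add, map_add, map_sub, pr_sub]
  module

lemma aS0_smul₂ (br : G →ₗ[ℝ] G →ₗ[ℝ] G) (𝔥 𝔨 : Submodule ℝ G) (pn pninv : G →L[ℝ] G)
    (c : ℝ) (V x : G) : aS0 br 𝔥 𝔨 pn pninv V (c • x) = c • aS0 br 𝔥 𝔨 pn pninv V x := by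
  simp only [aS0, pr_smul, map_smul, map_sub, pr_sub]
  module

lemma aS1_add₂ (br : G →ₗ[ℝ] G →ₗ[ℝ] G) (𝔥 𝔨 : Submodule ℝ G) (Bt pninv : G →L[ℝ] G)
    (V x y : G) : aS1 br 𝔥 𝔨 Bt pninv V (x + y)
      = aS1 br 𝔥 𝔨 Bt pninv V x + aS1 br 𝔥 𝔨 Bt pninv V y := by
  simp only [aS1, pr_add, map_add]
  module

lemma aS1_smul₂ (br : G →ₗ[ℝ] G →ₗ[ℝ] G) (𝔥 𝔨 : Submodule ℝ G) (Bt pninv : G →L[ℝ] G)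
    (c : ℝ) (V x : G) : aS1 br 𝔥 𝔨 Bt pninv V (c • x) = c • aS1 br 𝔥 𝔨 Bt pninv V x := by
  simp only [aS1, pr_smul, map_smul]
  module

/-- Coefficients of the extended curvature as a quadratic polynomial in `s`. -/
def aRm0 (br : G →ₗ[ℝ] G →ₗ[ℝ] G) (𝔥 𝔨 : Submodule ℝ G) (pn pninv : G →L[ℝ] G)
    (V₁ Z W : G) : G :=
  br (pr 𝔥 (br V₁ Z)) W
    - (aS0 br 𝔥 𝔨 pn pninv V₁ (aS0 br 𝔥 𝔨 pn pninv Z W)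
        - aS0 br 𝔥 𝔨 pn pninv Z (aS0 br 𝔥 𝔨 pn pninv V₁ W))
    - aS0 br 𝔥 𝔨 pn pninv (pr 𝔥ᗮ (br V₁ Z)) W

def aRm1 (br : G →ₗ[ℝ] G →ₗ[ℝ] G) (𝔥 𝔨 : Submodule ℝ G) (Bt pn pninv : G →L[ℝ] G)
    (V₁ Z W : G) : G :=
  -(aS0 br 𝔥 𝔨 pn pninv V₁ (aS1 br 𝔥 𝔨 Bt pninv Z W)
      + aS1 br 𝔥 𝔨 Bt pninv V₁ (aS0 br 𝔥 𝔨 pn pninv Z W)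
      - aS0 br 𝔥 𝔨 pn pninv Z (aS1 br 𝔥 𝔨 Bt pninv V₁ W)
      - aS1 br 𝔥 𝔨 Bt pninv Z (aS0 br 𝔥 𝔨 pn pninv V₁ W))
    - aS1 br 𝔥 𝔨 Bt pninv (pr 𝔥ᗮ (br V₁ Z)) W

def aRm2 (br : G →ₗ[ℝ] G →ₗ[ℝ] G) (𝔥 𝔨 : Submodule ℝ G) (Bt pninv : G →L[ℝ] G)
    (V₁ Z W : G) : G :=
  -(aS1 br 𝔥 𝔨 Bt pninv V₁ (aS1 br 𝔥 𝔨 Bt pninv Z W)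
      - aS1 br 𝔥 𝔨 Bt pninv Z (aS1 br 𝔥 𝔨 Bt pninv V₁ W))

lemma Rmfun_decomp (br : G →ₗ[ℝ] G →ₗ[ℝ] G) (𝔥 𝔨 : Submodule ℝ G)
    (Bt pn pninv : G →L[ℝ] G) (s : ℝ) (V₁ Z W : G) :
    Rmfun br 𝔥 𝔨 (s • Bt) pn pninv V₁ Z W
      = aRm0 br 𝔥 𝔨 pn pninv V₁ Z W + s • aRm1 br 𝔥 𝔨 Bt pn pninv V₁ Z W
        + (s * s) • aRm2 br 𝔥 𝔨 Bt pninv V₁ Z W := by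
  rw [Rmfun, Sfun_decomp br 𝔥 𝔨 Bt pn pninv s Z W, Sfun_decomp br 𝔥 𝔨 Bt pn pninv s V₁ W,
    Sfun_decomp br 𝔥 𝔨 Bt pn pninv s V₁ _, Sfun_decomp br 𝔥 𝔨 Bt pn pninv s Z _,
    Sfun_decomp br 𝔥 𝔨 Bt pn pninv s (pr 𝔥ᗮ (br V₁ Z)) W,
    aS0_add₂, aS0_smul₂, aS1_add₂, aS1_smul₂, aS0_add₂, aS0_smul₂, aS1_add₂, aS1_smul₂]
  rw [aRm0, aRm1, aRm2]
  module

/-- Coefficients of `RicBilin` as a quadratic polynomial in `s`. -/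
def aR0 (br : G →ₗ[ℝ] G →ₗ[ℝ] G) (𝔥 𝔨 : Submodule ℝ G) (pn pninv : G →L[ℝ] G)
    (V₁ V₂ : G) : ℝ :=
  ∑ i, ⟪((stdOrthonormalBasis ℝ 𝔥ᗮ) i : G),
    aRm0 br 𝔥 𝔨 pn pninv V₁ ((stdOrthonormalBasis ℝ 𝔥ᗮ) i : G) V₂⟫

def aR1 (br : G →ₗ[ℝ] G →ₗ[ℝ] G) (𝔥 𝔨 : Submodule ℝ G) (Bt pn pninv : G →L[ℝ] G)
    (V₁ V₂ : G) : ℝ :=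
  ∑ i, ⟪((stdOrthonormalBasis ℝ 𝔥ᗮ) i : G),
    aRm1 br 𝔥 𝔨 Bt pn pninv V₁ ((stdOrthonormalBasis ℝ 𝔥ᗮ) i : G) V₂⟫

def aR2 (br : G →ₗ[ℝ] G →ₗ[ℝ] G) (𝔥 𝔨 : Submodule ℝ G) (Bt pninv : G →L[ℝ] G)
    (V₁ V₂ : G) : ℝ :=
  ∑ i, ⟪((stdOrthonormalBasis ℝ 𝔥ᗮ) i : G),
    aRm2 br 𝔥 𝔨 Bt pninv V₁ ((stdOrthonormalBasis ℝ 𝔥ᗮ) i : G) V₂⟫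

lemma RicBilin_decomp (br : G →ₗ[ℝ] G →ₗ[ℝ] G) (𝔥 𝔨 : Submodule ℝ G)
    (Bt pn pninv : G →L[ℝ] G) (s : ℝ) (V₁ V₂ : G) :
    RicBilin br 𝔥 𝔨 (s • Bt) pn pninv V₁ V₂
      = aR0 br 𝔥 𝔨 pn pninv V₁ V₂ + s * aR1 br 𝔥 𝔨 Bt pn pninv V₁ V₂
        + (s * s) * aR2 br 𝔥 𝔨 Bt pninv V₁ V₂ := by
  rw [RicBilin, aR0, aR1, aR2, Finset.mul_sum, Finset.mul_sum, ← Finset.sum_add_distrib,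
    ← Finset.sum_add_distrib]
  refine Finset.sum_congr rfl fun i _ => ?_
  rw [Rmfun_decomp, inner_add_right, inner_add_right, real_inner_smul_right,
    real_inner_smul_right]

lemma aS0_add₁ (br : G →ₗ[ℝ] G →ₗ[ℝ] G) (𝔥 𝔨 : Submodule ℝ G) (pn pninv : G →L[ℝ] G)
    (x y W : G) : aS0 br 𝔥 𝔨 pn pninv (x + y) W
      = aS0 br 𝔥 𝔨 pn pninv x W + aS0 br 𝔥 𝔨 pn pninv y W := by
  simp only [aS0, pr_add, map_add, map_sub, pr_sub, LinearMap.add_apply]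
  module

lemma aS0_smul₁ (br : G →ₗ[ℝ] G →ₗ[ℝ] G) (𝔥 𝔨 : Submodule ℝ G) (pn pninv : G →L[ℝ] G)
    (c : ℝ) (x W : G) : aS0 br 𝔥 𝔨 pn pninv (c • x) W = c • aS0 br 𝔥 𝔨 pn pninv x W := by
  simp only [aS0, pr_smul, map_smul, map_sub, pr_sub, LinearMap.smul_apply]
  module

lemma aS1_add₁ (br : G →ₗ[ℝ] G →ₗ[ℝ] G) (𝔥 𝔨 : Submodule ℝ G) (Bt pninv : G →L[ℝ] G)
    (x y W : G) : aS1 br 𝔥 𝔨 Bt pninv (x + y) W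
      = aS1 br 𝔥 𝔨 Bt pninv x W + aS1 br 𝔥 𝔨 Bt pninv y W := by
  simp only [aS1, pr_add, map_add, LinearMap.add_apply]
  module

lemma aS1_smul₁ (br : G →ₗ[ℝ] G →ₗ[ℝ] G) (𝔥 𝔨 : Submodule ℝ G) (Bt pninv : G →L[ℝ] G)
    (c : ℝ) (x W : G) : aS1 br 𝔥 𝔨 Bt pninv (c • x) W = c • aS1 br 𝔥 𝔨 Bt pninv x W := by
  simp only [aS1, pr_smul, map_smul, LinearMap.smul_apply]
  module

/-- `aRm1 T · V` as a linear map. -/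
def aRm1L (br : G →ₗ[ℝ] G →ₗ[ℝ] G) (𝔥 𝔨 : Submodule ℝ G) (Bt pn pninv : G →L[ℝ] G)
    (T V : G) : G →ₗ[ℝ] G where
  toFun Z := aRm1 br 𝔥 𝔨 Bt pn pninv T Z V
  map_add' x y := by
    simp only [aRm1, aS0_add₁, aS1_add₁, aS0_add₂, aS1_add₂, map_add, pr_add,
      LinearMap.add_apply]
    abel
  map_smul' c x := by
    simp only [aRm1, aS0_smul₁, aS1_smul₁, aS0_smul₂, aS1_smul₂, map_smul, pr_smul,
      LinearMap.smul_apply, RingHom.id_apply]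
    module

/-- Values of `aS1` always lie in `𝔫 = 𝔨ᗮ`. -/
lemma aS1_mem_n (hLie : IsLieQ br) (hpair : IsToralPair br 𝔥 𝔨) {Bt pninv : G →L[ℝ] G}
    (hpninv : InvOn' 𝔨ᗮ pn pninv) (hBt : SymOn (𝔨 ⊓ 𝔥ᗮ) Bt) (V W : G) :
    aS1 br 𝔥 𝔨 Bt pninv V W ∈ 𝔨ᗮ := by
  apply Submodule.sub_mem
  · exact Submodule.smul_mem _ _ (hpninv.1 _ (br_k_n hLie hpair
      (t_le_k (hBt.1 _ (pr_mem _ V))) (pr_mem _ W)))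
  · exact Submodule.smul_mem _ _ (hpninv.1 _ (br_n_k hLie hpair
      (t_le_k (hBt.1 _ (pr_mem _ W))) (pr_mem _ V)))

lemma pr_n_of_k {x : G} (hx : x ∈ 𝔨) : pr 𝔨ᗮ x = 0 := pr_zero' (k_le_n_orth hx)

lemma pr_t_of_n {x : G} (hx : x ∈ 𝔨ᗮ) : pr (𝔨 ⊓ 𝔥ᗮ) x = 0 := pr_zero' (n_le_t_orth hx)

lemma aS0_t (br : G →ₗ[ℝ] G →ₗ[ℝ] G) (𝔥 𝔨 : Submodule ℝ G) (pn pninv : G →L[ℝ] G)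
    {t : G} (ht : t ∈ 𝔨 ⊓ 𝔥ᗮ) (x : G) :
    aS0 br 𝔥 𝔨 pn pninv t x = -(br t (pr 𝔨ᗮ x)) := by
  simp [aS0, pr_self ht, pr_n_of_k (t_le_k ht)]

lemma aS1_t (br : G →ₗ[ℝ] G →ₗ[ℝ] G) (𝔥 𝔨 : Submodule ℝ G) (Bt pninv : G →L[ℝ] G)
    {t : G} (ht : t ∈ 𝔨 ⊓ 𝔥ᗮ) (x : G) :
    aS1 br 𝔥 𝔨 Bt pninv t x = (2⁻¹ : ℝ) • pninv (br (Bt t) (pr 𝔨ᗮ x)) := by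
  simp [aS1, pr_self ht, pr_n_of_k (t_le_k ht)]

lemma aS0_n (br : G →ₗ[ℝ] G →ₗ[ℝ] G) (𝔥 𝔨 : Submodule ℝ G) (pn pninv : G →L[ℝ] G)
    {X : G} (hX : X ∈ 𝔨ᗮ) (x : G) :
    aS0 br 𝔥 𝔨 pn pninv X x = -((2⁻¹ : ℝ) • pr 𝔥ᗮ (br X (pr 𝔨ᗮ x)))
      - (2⁻¹ : ℝ) • pninv (pr 𝔨ᗮ (br X (pn (pr 𝔨ᗮ x))) - pr 𝔨ᗮ (br (pn X) (pr 𝔨ᗮ x))) := by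
  simp [aS0, pr_self hX, pr_t_of_n hX]

lemma aS1_n (br : G →ₗ[ℝ] G →ₗ[ℝ] G) (𝔥 𝔨 : Submodule ℝ G) (Bt pninv : G →L[ℝ] G)
    {X : G} (hX : X ∈ 𝔨ᗮ) (x : G) :
    aS1 br 𝔥 𝔨 Bt pninv X x = -((2⁻¹ : ℝ) • pninv (br X (Bt (pr (𝔨 ⊓ 𝔥ᗮ) x)))) := by
  simp [aS1, pr_self hX, pr_t_of_n hX]

lemma aS1_zero₁ (br : G →ₗ[ℝ] G →ₗ[ℝ] G) (𝔥 𝔨 : Submodule ℝ G) (Bt pninv : G →L[ℝ] G)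
    (x : G) : aS1 br 𝔥 𝔨 Bt pninv 0 x = 0 := by
  simp [aS1]

/-- The `𝔱`-block of the trace vanishes pointwise. -/
lemma tblock (hLie : IsLieQ br) (hpair : IsToralPair br 𝔥 𝔨)
    {pn pninv Bt : G →L[ℝ] G} (hpninv : InvOn' 𝔨ᗮ pn pninv) (hBt : SymOn (𝔨 ⊓ 𝔥ᗮ) Bt)
    {T u : G} (hT : T ∈ 𝔨 ⊓ 𝔥ᗮ) (hu : u ∈ 𝔨 ⊓ 𝔥ᗮ) (V : G) :
    ⟪u, aRm1 br 𝔥 𝔨 Bt pn pninv T u V⟫ = 0 := by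
  have hmem : aRm1 br 𝔥 𝔨 Bt pn pninv T u V ∈ 𝔨ᗮ := by
    rw [aRm1]
    have h1 : aS0 br 𝔥 𝔨 pn pninv T (aS1 br 𝔥 𝔨 Bt pninv u V) ∈ 𝔨ᗮ := by
      rw [aS0_t br 𝔥 𝔨 pn pninv hT]
      exact Submodule.neg_mem _ (br_k_n hLie hpair (t_le_k hT) (pr_mem _ _))
    have h2 : aS1 br 𝔥 𝔨 Bt pninv T (aS0 br 𝔥 𝔨 pn pninv u V) ∈ 𝔨ᗮ :=
      aS1_mem_n hLie hpair hpninv hBt _ _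
    have h3 : aS0 br 𝔥 𝔨 pn pninv u (aS1 br 𝔥 𝔨 Bt pninv T V) ∈ 𝔨ᗮ := by
      rw [aS0_t br 𝔥 𝔨 pn pninv hu]
      exact Submodule.neg_mem _ (br_k_n hLie hpair (t_le_k hu) (pr_mem _ _))
    have h4 : aS1 br 𝔥 𝔨 Bt pninv u (aS0 br 𝔥 𝔨 pn pninv T V) ∈ 𝔨ᗮ :=
      aS1_mem_n hLie hpair hpninv hBt _ _
    have h5 : aS1 br 𝔥 𝔨 Bt pninv (pr 𝔥ᗮ (br T u)) V ∈ 𝔨ᗮ := by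
      rw [br_central hLie hpair (t_le_k hT) hu]
      simp only [pr_zero, aS1_zero₁]
      exact Submodule.zero_mem _
    exact Submodule.sub_mem _ (Submodule.neg_mem _ (Submodule.sub_mem _ (Submodule.sub_mem _
      (Submodule.add_mem _ h1 h2) h3) h4)) h5
  exact (Submodule.mem_orthogonal 𝔨 _).1 hmem u (t_le_k hu)


/-- Reindexing lemma: a symmetric operator can be moved across the bilinear sum. -/
lemma rex (hLie : IsLieQ br) (A L : G →ₗ[ℝ] G)
    (hA1 : ∀ x ∈ 𝔨ᗮ, A x ∈ 𝔨ᗮ)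
    (hA2 : ∀ x ∈ 𝔨ᗮ, ∀ y ∈ 𝔨ᗮ, ⟪A x, y⟫ = ⟪x, A y⟫) :
    ∑ j, br (A ((stdOrthonormalBasis ℝ 𝔨ᗮ) j : G)) (L ((stdOrthonormalBasis ℝ 𝔨ᗮ) j : G))
      = ∑ j, br ((stdOrthonormalBasis ℝ 𝔨ᗮ) j : G)
          (L (A ((stdOrthonormalBasis ℝ 𝔨ᗮ) j : G))) := by
  set f := stdOrthonormalBasis ℝ ↥𝔨ᗮ with hf
  have hmem : ∀ j, ((f j : G)) ∈ 𝔨ᗮ := fun j => SetLike.coe_mem _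
  have step : ∀ j, br (A (f j : G)) (L (f j : G))
      = ∑ l, ⟪A (f j : G), (f l : G)⟫ • br (f l : G) (L (f j : G)) := by
    intro j
    conv_lhs => rw [← onb_expand 𝔨ᗮ (hA1 _ (hmem j))]
    simp only [map_sum, map_smul, LinearMap.sum_apply, LinearMap.smul_apply]
    rfl
  rw [Finset.sum_congr rfl fun j _ => step j, Finset.sum_comm]
  refine Finset.sum_congr rfl fun l _ => ?_
  have hcoe : ∀ j, ⟪A (f j : G), (f l : G)⟫ = ⟪A (f l : G), (f j : G)⟫ := by
    intro j
    rw [hA2 _ (hmem j) _ (hmem l), real_inner_comm]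
  calc ∑ j, ⟪A (f j : G), (f l : G)⟫ • br (f l : G) (L (f j : G))
      = ∑ j, ⟪A (f l : G), (f j : G)⟫ • br (f l : G) (L (f j : G)) :=
        Finset.sum_congr rfl fun j _ => by rw [hcoe j]
    _ = br (f l : G) (L (∑ j, ⟪A (f l : G), (f j : G)⟫ • (f j : G))) := by
        simp only [map_sum, map_smul]
    _ = br (f l : G) (L (A (f l : G))) := by rw [onb_expand 𝔨ᗮ (hA1 _ (hmem l))]

/-- Contraction of a bilinear form against a skew operator over an orthonormal basis. -/
lemma contract (g : G →ₗ[ℝ] G →ₗ[ℝ] ℝ) (b : G →ₗ[ℝ] G)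
    (hb1 : ∀ x ∈ 𝔨ᗮ, b x ∈ 𝔨ᗮ)
    (hb2 : ∀ x ∈ 𝔨ᗮ, ∀ y ∈ 𝔨ᗮ, ⟪b x, y⟫ = -⟪x, b y⟫) :
    ∑ j, (g (b ((stdOrthonormalBasis ℝ 𝔨ᗮ) j : G)) ((stdOrthonormalBasis ℝ 𝔨ᗮ) j : G)
      + g ((stdOrthonormalBasis ℝ 𝔨ᗮ) j : G) (b ((stdOrthonormalBasis ℝ 𝔨ᗮ) j : G))) = 0 := by
  set f := stdOrthonormalBasis ℝ ↥𝔨ᗮ with hf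
  have hmem : ∀ j, ((f j : G)) ∈ 𝔨ᗮ := fun j => SetLike.coe_mem _
  have e1 : ∀ j, g (b (f j : G)) (f j : G)
      = ∑ m, ⟪b (f j : G), (f m : G)⟫ * g (f m : G) (f j : G) := by
    intro j
    conv_lhs => rw [← onb_expand 𝔨ᗮ (hb1 _ (hmem j))]
    simp only [map_sum, map_smul, LinearMap.sum_apply, LinearMap.smul_apply, smul_eq_mul]
    rfl
  have e2 : ∀ j, g (f j : G) (b (f j : G))
      = ∑ m, ⟪b (f j : G), (f m : G)⟫ * g (f j : G) (f m : G) := by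
    intro j
    conv_lhs => rw [← onb_expand 𝔨ᗮ (hb1 _ (hmem j))]
    simp only [map_sum, map_smul, smul_eq_mul]
    rfl
  rw [Finset.sum_add_distrib, Finset.sum_congr rfl fun j _ => e1 j,
    Finset.sum_congr rfl fun j _ => e2 j,
    Finset.sum_comm (f := fun j m => ⟪b (f j : G), (f m : G)⟫ * g (f m : G) (f j : G)),
    ← Finset.sum_add_distrib]
  apply Finset.sum_eq_zero
  intro j _
  rw [← Finset.sum_add_distrib]
  apply Finset.sum_eq_zero
  intro m _
  have hsk : ⟪b (f m : G), (f j : G)⟫ = -⟪b (f j : G), (f m : G)⟫ := by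
    rw [hb2 _ (hmem m) _ (hmem j), real_inner_comm]
  rw [hsk]
  ring

/-- `∑ⱼ [fⱼ, P⁻¹ fⱼ] = 0`. -/
lemma lam1 (hLie : IsLieQ br) {pn pninv : G →L[ℝ] G} (hpn : SymOn 𝔨ᗮ pn)
    (hpninv : InvOn' 𝔨ᗮ pn pninv) :
    ∑ j, br ((stdOrthonormalBasis ℝ 𝔨ᗮ) j : G) (pninv ((stdOrthonormalBasis ℝ 𝔨ᗮ) j : G))
      = 0 := by
  have h := rex (𝔨 := 𝔨) hLie ((pninv : G →L[ℝ] G) : G →ₗ[ℝ] G) LinearMap.id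
    (fun x hx => hpninv.1 x hx) (fun x hx y hy => pninv_sym hpn hpninv hx hy)
  simp only [ContinuousLinearMap.coe_coe, LinearMap.id_coe, id_eq] at h
  have h2 : ∀ j : Fin (Module.finrank ℝ ↥𝔨ᗮ),
      br (pninv ((stdOrthonormalBasis ℝ 𝔨ᗮ) j : G)) ((stdOrthonormalBasis ℝ 𝔨ᗮ) j : G)
      = -br ((stdOrthonormalBasis ℝ 𝔨ᗮ) j : G) (pninv ((stdOrthonormalBasis ℝ 𝔨ᗮ) j : G)) :=
    fun j => br_skew hLie _ _
  rw [Finset.sum_congr rfl fun j _ => h2 j, Finset.sum_neg_distrib] at h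
  have h3 : (2 : ℝ) • ∑ j, br ((stdOrthonormalBasis ℝ 𝔨ᗮ) j : G)
      (pninv ((stdOrthonormalBasis ℝ 𝔨ᗮ) j : G)) = 0 := by
    rw [two_smul]
    nth_rewrite 1 [← h]
    simp
  rcases smul_eq_zero.1 h3 with h4 | h4
  · norm_num at h4
  · exact h4

/-- `∑ⱼ [P fⱼ, P⁻¹ fⱼ] = 0`. -/
lemma lam2 (hLie : IsLieQ br) {pn pninv : G →L[ℝ] G} (hpn : SymOn 𝔨ᗮ pn)
    (hpninv : InvOn' 𝔨ᗮ pn pninv) :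
    ∑ j, br (pn ((stdOrthonormalBasis ℝ 𝔨ᗮ) j : G))
      (pninv ((stdOrthonormalBasis ℝ 𝔨ᗮ) j : G)) = 0 := by
  have h := rex (𝔨 := 𝔨) hLie ((pn : G →L[ℝ] G) : G →ₗ[ℝ] G)
    ((pninv : G →L[ℝ] G) : G →ₗ[ℝ] G) (fun x hx => hpn.1 x hx)
    (fun x hx y hy => hpn.2 x hx y hy)
  simp only [ContinuousLinearMap.coe_coe] at h
  rw [h]
  apply Finset.sum_eq_zero
  intro j _
  rw [hpninv.2.1 _ (SetLike.coe_mem _)]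
  exact hLie.alt _

/-- `∑ⱼ [P fⱼ, P⁻¹ [k₁, P⁻¹ fⱼ]] = ∑ⱼ [fⱼ, [k₁, P⁻¹ fⱼ]]`. -/
lemma lam3 (hLie : IsLieQ br) (hpair : IsToralPair br 𝔥 𝔨) {pn pninv : G →L[ℝ] G}
    (hpn : SymOn 𝔨ᗮ pn) (hpncomm : CommAd br 𝔨 pn) (hpninv : InvOn' 𝔨ᗮ pn pninv)
    {k₁ : G} (hk₁ : k₁ ∈ 𝔨) :
    ∑ j, br (pn ((stdOrthonormalBasis ℝ 𝔨ᗮ) j : G))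
        (pninv (br k₁ (pninv ((stdOrthonormalBasis ℝ 𝔨ᗮ) j : G))))
      = ∑ j, br ((stdOrthonormalBasis ℝ 𝔨ᗮ) j : G)
          (br k₁ (pninv ((stdOrthonormalBasis ℝ 𝔨ᗮ) j : G))) := by
  have h := rex (𝔨 := 𝔨) hLie ((pn : G →L[ℝ] G) : G →ₗ[ℝ] G)
    ((((pninv : G →L[ℝ] G) : G →ₗ[ℝ] G).comp (br k₁)).comp
      ((pninv : G →L[ℝ] G) : G →ₗ[ℝ] G))
    (fun x hx => hpn.1 x hx) (fun x hx y hy => hpn.2 x hx y hy)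
  simp only [ContinuousLinearMap.coe_coe, LinearMap.comp_apply] at h
  rw [h]
  refine Finset.sum_congr rfl fun j _ => ?_
  rw [hpninv.2.1 _ (SetLike.coe_mem _),
    pninv_br_k hLie hpair hpncomm hpninv hk₁ (SetLike.coe_mem _)]

/-- KEY LEMMA: `⟪∑ⱼ [fⱼ, P⁻¹[k₁, P⁻¹ fⱼ]], W⟫ = 0` for `k₁ ∈ 𝔱`, `W ∈ 𝔫`. -/
lemma keyKL (hLie : IsLieQ br) (hpair : IsToralPair br 𝔥 𝔨) (hmax : NoTrivial br 𝔨)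
    {pn pninv : G →L[ℝ] G} (hpn : SymOn 𝔨ᗮ pn) (hpncomm : CommAd br 𝔨 pn)
    (hpninv : InvOn' 𝔨ᗮ pn pninv)
    {k₁ : G} (hk₁ : k₁ ∈ 𝔨 ⊓ 𝔥ᗮ) {W : G} (hW : W ∈ 𝔨ᗮ) :
    ⟪∑ j, br ((stdOrthonormalBasis ℝ 𝔨ᗮ) j : G)
        (pninv (br k₁ (pninv ((stdOrthonormalBasis ℝ 𝔨ᗮ) j : G)))), W⟫ = 0 := by
  have hmem : ∀ j, (((stdOrthonormalBasis ℝ 𝔨ᗮ) j : G)) ∈ 𝔨ᗮ := fun j => SetLike.coe_mem _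
  -- reindex to the symmetric form Ξ = ∑ⱼ [P⁻¹fⱼ, [k₁, P⁻¹fⱼ]]
  have hre : ∑ j, br ((stdOrthonormalBasis ℝ 𝔨ᗮ) j : G)
      (pninv (br k₁ (pninv ((stdOrthonormalBasis ℝ 𝔨ᗮ) j : G))))
      = ∑ j, br (pninv ((stdOrthonormalBasis ℝ 𝔨ᗮ) j : G))
          (br k₁ (pninv ((stdOrthonormalBasis ℝ 𝔨ᗮ) j : G))) := by
    have h := rex (𝔨 := 𝔨) hLie ((pninv : G →L[ℝ] G) : G →ₗ[ℝ] G)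
      ((br k₁).comp ((pninv : G →L[ℝ] G) : G →ₗ[ℝ] G))
      (fun x hx => hpninv.1 x hx) (fun x hx y hy => pninv_sym hpn hpninv hx hy)
    simp only [ContinuousLinearMap.coe_coe, LinearMap.comp_apply] at h
    rw [h]
    refine Finset.sum_congr rfl fun j _ => ?_
    rw [pninv_br_k hLie hpair hpncomm hpninv (t_le_k hk₁) (hpninv.1 _ (hmem j))]
  rw [hre]
  set Ξ := ∑ j, br (pninv ((stdOrthonormalBasis ℝ 𝔨ᗮ) j : G))
      (br k₁ (pninv ((stdOrthonormalBasis ℝ 𝔨ᗮ) j : G))) with hXi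
  set N₀ := pr 𝔨ᗮ Ξ with hN
  have hNmem : N₀ ∈ 𝔨ᗮ := pr_mem _ _
  have hNk : ∀ k ∈ 𝔨, br k N₀ = 0 := by
    intro k hk
    have key : ∀ X ∈ 𝔨ᗮ, ⟪br k N₀, X⟫ = 0 := by
      intro X hX
      rw [br_inner hLie]
      have h1 : ⟪N₀, br k X⟫ = ⟪Ξ, br k X⟫ := by
        rw [hN, pr_adj, pr_self (br_k_n hLie hpair hk hX)]
      rw [h1]
      have h2 : ⟪Ξ, br k X⟫ = 0 := by
        rw [hXi, sum_inner]
        -- per-term Jacobi expansion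
        have hterm : ∀ j, ⟪br (pninv ((stdOrthonormalBasis ℝ 𝔨ᗮ) j : G))
            (br k₁ (pninv ((stdOrthonormalBasis ℝ 𝔨ᗮ) j : G))), br k X⟫
            = -(⟪br (pninv (br k ((stdOrthonormalBasis ℝ 𝔨ᗮ) j : G)))
                  (br k₁ (pninv ((stdOrthonormalBasis ℝ 𝔨ᗮ) j : G))), X⟫
               + ⟪br (pninv ((stdOrthonormalBasis ℝ 𝔨ᗮ) j : G))
                  (br k₁ (pninv (br k ((stdOrthonormalBasis ℝ 𝔨ᗮ) j : G)))), X⟫) := by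
          intro j
          set u := pninv ((stdOrthonormalBasis ℝ 𝔨ᗮ) j : G) with hu
          have j1 : ⟪br u (br k₁ u), br k X⟫ = -⟪br k (br u (br k₁ u)), X⟫ :=
            inner_br hLie k _ X
          have j2 : br k (br u (br k₁ u)) = br (br k u) (br k₁ u) + br u (br k₁ (br k u)) := by
            rw [br_leibniz hLie k u (br k₁ u)]
            congr 1
            rw [br_leibniz hLie k k₁ u,
              br_central hLie hpair hk hk₁]
            simp
          have j3 : br k u = pninv (br k ((stdOrthonormalBasis ℝ 𝔨ᗮ) j : G)) := by
            rw [hu, ← pninv_br_k hLie hpair hpncomm hpninv hk (hmem j)]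
          rw [j1, j2, j3, inner_add_left]
        rw [Finset.sum_congr rfl fun j _ => hterm j]
        rw [Finset.sum_neg_distrib, neg_eq_zero]
        -- contraction lemma with the bilinear form g
        have hgb : ∀ (x y : G), ⟪br (pninv x) (br k₁ (pninv y)), X⟫
            = ((LinearMap.mk₂ ℝ (fun x y => ⟪br (pninv x) (br k₁ (pninv y)), X⟫)
              (fun m₁ m₂ n => by
                simp only [map_add, LinearMap.add_apply, inner_add_left])
              (fun c m n => by
                simp only [map_smul, LinearMap.smul_apply, real_inner_smul_left,
                  smul_eq_mul])
              (fun m n₁ n₂ => by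
                simp only [map_add, LinearMap.add_apply, inner_add_left])
              (fun c m n => by
                simp only [map_smul, LinearMap.smul_apply, real_inner_smul_left,
                  smul_eq_mul])) x) y := fun x y => rfl
        rw [Finset.sum_congr rfl fun j _ => by rw [hgb, hgb]]
        exact contract (𝔨 := 𝔨) _ (br k) (fun x hx => br_k_n hLie hpair hk hx)
          (fun x hx y hy => br_inner hLie k x y)
      rw [h2, neg_zero]
    have hm2 : br k N₀ ∈ 𝔨ᗮ := br_k_n hLie hpair hk hNmem
    have := key _ hm2
    rwa [inner_self_eq_zero] at this
  have hN0 : N₀ = 0 := hmax N₀ hNmem hNk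
  calc ⟪Ξ, W⟫ = ⟪Ξ, pr 𝔨ᗮ W⟫ := by rw [pr_self hW]
    _ = ⟪pr 𝔨ᗮ Ξ, W⟫ := by rw [pr_adj, pr_self hW]
    _ = 0 := by rw [← hN, hN0, inner_zero_left]

/-- Pointwise reduction of the `𝔫`-block summand. -/
lemma pwlem (hLie : IsLieQ br) (hpair : IsToralPair br 𝔥 𝔨)
    {pn pninv Bt : G →L[ℝ] G} (hpn : SymOn 𝔨ᗮ pn) (hpncomm : CommAd br 𝔨 pn)
    (hpninv : InvOn' 𝔨ᗮ pn pninv) (hBt : SymOn (𝔨 ⊓ 𝔥ᗮ) Bt)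
    {T X : G} (hT : T ∈ 𝔨 ⊓ 𝔥ᗮ) (hX : X ∈ 𝔨ᗮ) (V : G) :
    ⟪X, aRm1 br 𝔥 𝔨 Bt pn pninv T X V⟫
      = (4⁻¹ : ℝ) * ⟪br X (br (Bt T) (pninv X)), pr 𝔨ᗮ V⟫
        + (4⁻¹ : ℝ) * ⟪br X (pninv (br (Bt T) (pninv X))), pn (pr 𝔨ᗮ V)⟫
        - (4⁻¹ : ℝ) * ⟪br (pn X) (pninv (br (Bt T) (pninv X))), pr 𝔨ᗮ V⟫
        + (4⁻¹ : ℝ) * ⟪br X (pninv X), pn (pninv (br (Bt T) (pr 𝔨ᗮ V)))⟫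
        - (4⁻¹ : ℝ) * ⟪br (pn X) (pninv X), pninv (br (Bt T) (pr 𝔨ᗮ V))⟫ := by
  set Y := pr 𝔨ᗮ V with hYdef
  set k₁ := Bt T with hk₁def
  set k₂ := Bt (pr (𝔨 ⊓ 𝔥ᗮ) V) with hk₂def
  have hY : Y ∈ 𝔨ᗮ := pr_mem _ _
  have hk₁t : k₁ ∈ 𝔨 ⊓ 𝔥ᗮ := hBt.1 T hT
  have hk₁k : k₁ ∈ 𝔨 := t_le_k hk₁t
  have hk₂t : k₂ ∈ 𝔨 ⊓ 𝔥ᗮ := hBt.1 _ (pr_mem _ V)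
  have hk₂k : k₂ ∈ 𝔨 := t_le_k hk₂t
  have hTk : T ∈ 𝔨 := t_le_k hT
  have hXm : X ∈ 𝔥ᗮ := n_le_m hpair hX
  have hSX : pninv X ∈ 𝔨ᗮ := hpninv.1 X hX
  set w' := pninv (br k₁ Y) with hw'def
  have hw' : w' ∈ 𝔨ᗮ := hpninv.1 _ (br_k_n hLie hpair hk₁k hY)
  set g := pninv (br k₁ (pninv X)) with hgdef
  have hg : g ∈ 𝔨ᗮ := hpninv.1 _ (br_k_n hLie hpair hk₁k hSX)
  have hTX : br T X ∈ 𝔨ᗮ := br_k_n hLie hpair hTk hX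
  have hXk₂ : br X k₂ ∈ 𝔨ᗮ := br_n_k hLie hpair hk₂k hX
  -- the five pieces
  have cA : aS0 br 𝔥 𝔨 pn pninv T (aS1 br 𝔥 𝔨 Bt pninv X V)
      = (2⁻¹ : ℝ) • br T (pninv (br X k₂)) := by
    rw [aS1_n br 𝔥 𝔨 Bt pninv hX V, aS0_t br 𝔥 𝔨 pn pninv hT, ← hk₂def, pr_neg, pr_smul,
      pr_self (hpninv.1 _ hXk₂)]
    simp [map_neg, map_smul]
  have cB : aS1 br 𝔥 𝔨 Bt pninv T (aS0 br 𝔥 𝔨 pn pninv X V)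
      = -((4⁻¹ : ℝ) • pninv (br k₁ (pr 𝔨ᗮ (br X Y))))
        - (4⁻¹ : ℝ) • pninv (br k₁ (pninv (pr 𝔨ᗮ (br X (pn Y)) - pr 𝔨ᗮ (br (pn X) Y)))) := by
    rw [aS0_n br 𝔥 𝔨 pn pninv hX V, aS1_t br 𝔥 𝔨 Bt pninv hT, ← hYdef, ← hk₁def]
    rw [pr_sub, pr_neg, pr_smul, pr_smul, pr_pr_of_le (n_le_m hpair),
      pr_self (hpninv.1 _ (Submodule.sub_mem _ (pr_mem _ _) (pr_mem _ _)))]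
    simp only [map_neg, map_smul, map_sub, smul_neg, smul_sub, smul_smul]
    module
  have cC : aS0 br 𝔥 𝔨 pn pninv X (aS1 br 𝔥 𝔨 Bt pninv T V)
      = -((4⁻¹ : ℝ) • pr 𝔥ᗮ (br X w'))
        - (4⁻¹ : ℝ) • pninv (pr 𝔨ᗮ (br X (pn w')) - pr 𝔨ᗮ (br (pn X) w')) := by
    rw [aS1_t br 𝔥 𝔨 Bt pninv hT V, ← hYdef, ← hk₁def, ← hw'def,
      aS0_n br 𝔥 𝔨 pn pninv hX, pr_smul, pr_self hw']
    simp only [map_smul, map_sub, smul_sub, smul_smul, pr_smul, pr_sub]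
    module
  have cD : aS1 br 𝔥 𝔨 Bt pninv X (aS0 br 𝔥 𝔨 pn pninv T V) = 0 := by
    rw [aS0_t br 𝔥 𝔨 pn pninv hT V, aS1_n br 𝔥 𝔨 Bt pninv hX, pr_neg,
      pr_t_of_n (br_k_n hLie hpair hTk (pr_mem _ V))]
    simp
  have cE : aS1 br 𝔥 𝔨 Bt pninv (pr 𝔥ᗮ (br T X)) V
      = -((2⁻¹ : ℝ) • pninv (br (br T X) k₂)) := by
    rw [pr_self (n_le_m hpair hTX), aS1_n br 𝔥 𝔨 Bt pninv hTX V, ← hk₂def]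
  -- atoms
  have a1 : ⟪X, br T (pninv (br X k₂))⟫ = -⟪X, br T (br k₂ (pninv X))⟫ := by
    have e : pninv (br X k₂) = -br k₂ (pninv X) := by
      rw [br_skew hLie X k₂, map_neg, pninv_br_k hLie hpair hpncomm hpninv hk₂k hX]
    rw [e, map_neg, inner_neg_right]
  have a6 : ⟪X, pninv (br (br T X) k₂)⟫ = -⟪X, br T (br k₂ (pninv X))⟫ := by
    have e1 : pninv (br (br T X) k₂) = -br k₂ (pninv (br T X)) := by
      rw [br_skew hLie (br T X) k₂, map_neg,
        pninv_br_k hLie hpair hpncomm hpninv hk₂k hTX]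
    rw [e1, inner_neg_right, neg_inj]
    calc ⟪X, br k₂ (pninv (br T X))⟫
        = -⟪br k₂ X, pninv (br T X)⟫ := inner_br hLie k₂ X _
      _ = -⟪pninv (br k₂ X), br T X⟫ := by
          rw [pninv_sym hpn hpninv (br_k_n hLie hpair hk₂k hX) hTX]
      _ = -⟪br k₂ (pninv X), br T X⟫ := by
          rw [pninv_br_k hLie hpair hpncomm hpninv hk₂k hX]
      _ = ⟪br T (br k₂ (pninv X)), X⟫ := by
          rw [inner_br hLie T (br k₂ (pninv X)) X]; ring_nf
      _ = ⟪X, br T (br k₂ (pninv X))⟫ := real_inner_comm _ _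
  have a2 : ⟪X, pninv (br k₁ (pr 𝔨ᗮ (br X Y)))⟫ = ⟪br X (br k₁ (pninv X)), Y⟫ := by
    calc ⟪X, pninv (br k₁ (pr 𝔨ᗮ (br X Y)))⟫
        = ⟪pninv X, br k₁ (pr 𝔨ᗮ (br X Y))⟫ :=
          (pninv_sym hpn hpninv hX (br_k_n hLie hpair hk₁k (pr_mem _ _))).symm
      _ = -⟪br k₁ (pninv X), pr 𝔨ᗮ (br X Y)⟫ := inner_br hLie k₁ (pninv X) _
      _ = -⟪br k₁ (pninv X), br X Y⟫ := by
          rw [inner_pr_right_of_mem (br_k_n hLie hpair hk₁k hSX)]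
      _ = ⟪br X (br k₁ (pninv X)), Y⟫ := by
          rw [inner_br hLie X (br k₁ (pninv X)) Y]; ring_nf
  have a3gen : ∀ u, u ∈ 𝔨ᗮ → ⟪X, pninv (br k₁ (pninv u))⟫ = -⟪g, u⟫ := by
    intro u hu
    calc ⟪X, pninv (br k₁ (pninv u))⟫
        = ⟪pninv X, br k₁ (pninv u)⟫ :=
          (pninv_sym hpn hpninv hX (br_k_n hLie hpair hk₁k (hpninv.1 u hu))).symm
      _ = -⟪br k₁ (pninv X), pninv u⟫ := inner_br hLie k₁ (pninv X) _
      _ = -⟪g, u⟫ := by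
          rw [hgdef, pninv_sym hpn hpninv (br_k_n hLie hpair hk₁k hSX) hu]
  have a3 : ⟪X, pninv (br k₁ (pninv (pr 𝔨ᗮ (br X (pn Y)) - pr 𝔨ᗮ (br (pn X) Y))))⟫
      = ⟪br X g, pn Y⟫ - ⟪br (pn X) g, Y⟫ := by
    rw [a3gen _ (Submodule.sub_mem _ (pr_mem _ _) (pr_mem _ _)), inner_sub_right,
      inner_pr_right_of_mem hg, inner_pr_right_of_mem hg,
      inner_br hLie X g (pn Y), inner_br hLie (pn X) g Y]
    ring
  have a4 : ⟪X, pr 𝔥ᗮ (br X w')⟫ = 0 := by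
    rw [inner_pr_right_of_mem hXm, inner_br hLie X X w', hLie.alt, inner_zero_left, neg_zero]
  have a5 : ⟪X, pninv (pr 𝔨ᗮ (br X (pn w')) - pr 𝔨ᗮ (br (pn X) w'))⟫
      = -⟪br X (pninv X), pn w'⟫ + ⟪br (pn X) (pninv X), w'⟫ := by
    calc ⟪X, pninv (pr 𝔨ᗮ (br X (pn w')) - pr 𝔨ᗮ (br (pn X) w'))⟫
        = ⟪pninv X, pr 𝔨ᗮ (br X (pn w')) - pr 𝔨ᗮ (br (pn X) w')⟫ :=
          (pninv_sym hpn hpninv hX (Submodule.sub_mem _ (pr_mem _ _) (pr_mem _ _))).symm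
      _ = ⟪pninv X, pr 𝔨ᗮ (br X (pn w'))⟫ - ⟪pninv X, pr 𝔨ᗮ (br (pn X) w')⟫ :=
          inner_sub_right _ _ _
      _ = ⟪pninv X, br X (pn w')⟫ - ⟪pninv X, br (pn X) w'⟫ := by
          rw [inner_pr_right_of_mem hSX, inner_pr_right_of_mem hSX]
      _ = -⟪br X (pninv X), pn w'⟫ + ⟪br (pn X) (pninv X), w'⟫ := by
          rw [inner_br hLie X (pninv X) (pn w'), inner_br hLie (pn X) (pninv X) w']
          ring
  -- assemble
  rw [aRm1, cA, cB, cC, cD, cE]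
  simp only [inner_add_right, inner_sub_right, inner_neg_right, real_inner_smul_right,
    sub_zero, inner_zero_right]
  rw [a1, a2, a3, a4, a5, a6]
  ring

/-- The `𝔫`-block of the trace vanishes. -/
lemma nblock (hLie : IsLieQ br) (hpair : IsToralPair br 𝔥 𝔨) (hmax : NoTrivial br 𝔨)
    {pn pninv Bt : G →L[ℝ] G} (hpn : SymOn 𝔨ᗮ pn) (hpncomm : CommAd br 𝔨 pn)
    (hpninv : InvOn' 𝔨ᗮ pn pninv) (hBt : SymOn (𝔨 ⊓ 𝔥ᗮ) Bt)
    {T : G} (hT : T ∈ 𝔨 ⊓ 𝔥ᗮ) (V : G) :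
    ∑ j, ⟪((stdOrthonormalBasis ℝ 𝔨ᗮ) j : G),
      aRm1 br 𝔥 𝔨 Bt pn pninv T ((stdOrthonormalBasis ℝ 𝔨ᗮ) j : G) V⟫ = 0 := by
  have hk₁t : Bt T ∈ 𝔨 ⊓ 𝔥ᗮ := hBt.1 T hT
  have hk₁k : Bt T ∈ 𝔨 := t_le_k hk₁t
  have hY : pr 𝔨ᗮ V ∈ 𝔨ᗮ := pr_mem _ _
  rw [Finset.sum_congr rfl fun j _ =>
    pwlem hLie hpair hpn hpncomm hpninv hBt hT (SetLike.coe_mem _) V]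
  simp only [Finset.sum_add_distrib, Finset.sum_sub_distrib, ← Finset.mul_sum, ← sum_inner]
  rw [lam1 hLie hpn hpninv, lam2 hLie hpn hpninv,
    lam3 hLie hpair hpn hpncomm hpninv hk₁k,
    keyKL hLie hpair hmax hpn hpncomm hpninv hk₁t (hpn.1 _ hY)]
  simp


/-- MAIN vanishing lemma: the coefficient of `s` in the extended Ricci curve, evaluated
at a vertical direction `T ∈ 𝔱`, vanishes. -/
lemma aR1_eq_zero (hLie : IsLieQ br) (hpair : IsToralPair br 𝔥 𝔨) (hmax : NoTrivial br 𝔨)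
    {pn pninv Bt : G →L[ℝ] G} (hpn : SymOn 𝔨ᗮ pn) (hpncomm : CommAd br 𝔨 pn)
    (hpninv : InvOn' 𝔨ᗮ pn pninv) (hBt : SymOn (𝔨 ⊓ 𝔥ᗮ) Bt)
    {T : G} (hT : T ∈ 𝔨 ⊓ 𝔥ᗮ) (V : G) :
    aR1 br 𝔥 𝔨 Bt pn pninv T V = 0 := by
  have h0 : aR1 br 𝔥 𝔨 Bt pn pninv T V
      = ∑ i, ⟪((stdOrthonormalBasis ℝ 𝔥ᗮ) i : G),
          (aRm1L br 𝔥 𝔨 Bt pn pninv T V) ((stdOrthonormalBasis ℝ 𝔥ᗮ) i : G)⟫ := rfl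
  rw [h0, split_trace hpair (aRm1L br 𝔥 𝔨 Bt pn pninv T V)]
  have h1 : ∑ a, ⟪((stdOrthonormalBasis ℝ ↥(𝔨 ⊓ 𝔥ᗮ)) a : G),
      (aRm1L br 𝔥 𝔨 Bt pn pninv T V) ((stdOrthonormalBasis ℝ ↥(𝔨 ⊓ 𝔥ᗮ)) a : G)⟫ = 0 :=
    Finset.sum_eq_zero fun a _ =>
      tblock hLie hpair hpninv hBt hT (SetLike.coe_mem _) V
  have h2 : ∑ j, ⟪((stdOrthonormalBasis ℝ 𝔨ᗮ) j : G),
      (aRm1L br 𝔥 𝔨 Bt pn pninv T V) ((stdOrthonormalBasis ℝ 𝔨ᗮ) j : G)⟫ = 0 :=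
    nblock hLie hpair hmax hpn hpncomm hpninv hBt hT V
  rw [h1, h2, add_zero]

end Aux

/-- assuming no nonzero `X ∈ 𝔫` commutes with all of `𝔨`, the derivative at
`s = 0` of the curve `s ↦ Ric((s·B_𝔱) ⊕ P_𝔫)` of extended Ricci endomorphisms annihilates
`𝔱 = 𝔨 ⊓ 𝔥ᗮ`. -/
theorem diff_extRic_vertical
    (hLie : IsLieQ br) (𝔥 𝔨 : Submodule ℝ G) (hpair : IsToralPair br 𝔥 𝔨)
    (hmax : NoTrivial br 𝔨)
    (pn pninv : G →L[ℝ] G)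
    (hpn : SymOn 𝔨ᗮ pn) (hpnpos : PosDefOn 𝔨ᗮ pn) (hpncomm : CommAd br 𝔨 pn)
    (hpninv : InvOn' 𝔨ᗮ pn pninv)
    (Bt : G →L[ℝ] G) (hBt : SymOn (𝔨 ⊓ 𝔥ᗮ) Bt)
    (Ric : ℝ → (G →L[ℝ] G))
    (hRic : ∀ s : ℝ, IsExtRic br 𝔥 𝔨 (s • Bt) pn pninv (Ric s)) :
    ∃ D : G →L[ℝ] G, HasDerivAt Ric D 0 ∧ ∀ T ∈ 𝔨 ⊓ 𝔥ᗮ, D T = 0 := by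
  classical
  have hform : ∀ (s : ℝ) (v w : G), ⟪Ric s v, w⟫
      = RicBilin br 𝔥 𝔨 (s • Bt) pn pninv (pr 𝔥ᗮ v) (pr 𝔥ᗮ w) := by
    intro s v w
    have h1 := (hRic s).1
    conv_lhs => rw [h1]
    rw [show ((projL 𝔥ᗮ).comp ((Ric s).comp (projL 𝔥ᗮ))) v = pr 𝔥ᗮ (Ric s (pr 𝔥ᗮ v)) from rfl,
      pr_adj]
    exact (hRic s).2 _ (pr_mem _ _) _ (pr_mem _ _)
  set D : G →L[ℝ] G := (2⁻¹ : ℝ) • (Ric 1 - Ric (-1)) with hDdef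
  set E : G →L[ℝ] G := (2⁻¹ : ℝ) • (Ric 1 + Ric (-1)) - Ric 0 with hEdef
  have hpoly : ∀ s, Ric s = Ric 0 + s • D + (s * s) • E := by
    intro s
    ext v
    apply ext_inner_right ℝ
    intro w
    have h0 := hform 0 v w
    have h1' := hform 1 v w
    have h2' := hform (-1) v w
    have hs := hform s v w
    rw [RicBilin_decomp] at h0 h1' h2' hs
    simp only [hDdef, hEdef, ContinuousLinearMap.add_apply, ContinuousLinearMap.smul_apply,
      ContinuousLinearMap.sub_apply, inner_add_left, inner_sub_left, real_inner_smul_left]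
    rw [hs, h0, h1', h2']
    ring
  have hderiv : HasDerivAt Ric D 0 := by
    have ha : HasDerivAt (fun s : ℝ => s • D) D 0 := by
      simpa using (hasDerivAt_id (0 : ℝ)).smul_const D
    have hb : HasDerivAt (fun s : ℝ => (s * s) • E) (0 : G →L[ℝ] G) 0 := by
      have := ((hasDerivAt_id (0 : ℝ)).mul (hasDerivAt_id (0 : ℝ))).smul_const E
      simpa using this
    have hc := ((hasDerivAt_const (0 : ℝ) (Ric 0)).add ha).add hb
    have heq : Ric = fun s => Ric 0 + s • D + (s * s) • E := funext hpoly
    rw [heq]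
    simp only [zero_add, add_zero] at hc
    exact hc
  refine ⟨D, hderiv, ?_⟩
  intro T hT
  apply ext_inner_right ℝ
  intro w
  have h1' := hform 1 T w
  have h2' := hform (-1) T w
  rw [RicBilin_decomp] at h1' h2'
  rw [pr_self (t_le_m hT)] at h1' h2'
  simp only [hDdef, ContinuousLinearMap.smul_apply, ContinuousLinearMap.sub_apply,
    inner_sub_left, real_inner_smul_left]
  rw [h1', h2', aR1_eq_zero hLie hpair hmax hpn hpncomm hpninv hBt hT (pr 𝔥ᗮ w)]
  simp
end
end

section
/- Let p = (c, c, 2c) ∈ (0,∞)³ with c = (1/3)·(27/2)^{1/3}. Then: (i) p₁·p₂·p₃ = 1 (so the corresponding metric has unit volume); (ii) the derivative of f at p vanishes (p is a critical point of f); (iii) the second derivative of f at p, viewed as a quadratic form on ℝ³, has kernel exactly the line ℝ·p and, counted with multiplicity, exactly one positive eigenvalue and exactly one negative eigenvalue. In particular, the Kähler–Einstein metric on SU(3)/T² has coindex 1. -/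
noncomputable section

/-- The normalized scalar curvature of invariant metrics on the full flag manifold
`SU(3)/T²`. -/
def scalSU3 : (Fin 3 → ℝ) → ℝ := fun x =>
  (x 0 * x 1 * x 2) ^ ((1 : ℝ) / 3) *
    (1 / x 0 + 1 / x 1 + 1 / x 2
      - (1 / 6) * (x 0 / (x 1 * x 2) + x 1 / (x 0 * x 2) + x 2 / (x 0 * x 1)))

/-- The second derivative of `f` at `p`, as a quadratic/bilinear form. -/
def hessSU3 (p v w : Fin 3 → ℝ) : ℝ := iteratedFDeriv ℝ 2 scalSU3 p ![v, w]

namespace KE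

abbrev E3 := Fin 3 → ℝ

def PP (x : E3) : ℝ := x 0 * x 1 * x 2
def MM (x : E3) : ℝ := x 0 * x 1 + x 1 * x 2 + x 0 * x 2 - 1/6 * (x 0 * x 0 + x 1 * x 1 + x 2 * x 2)
def ee : ℝ := -(2 : ℝ) / 3

def U : Set E3 := {x | 0 < x 0 ∧ 0 < x 1 ∧ 0 < x 2}

lemma isOpen_U : IsOpen U := by
  have h : U = (fun x : E3 => x 0) ⁻¹' Set.Ioi 0 ∩
      ((fun x : E3 => x 1) ⁻¹' Set.Ioi 0 ∩ (fun x : E3 => x 2) ⁻¹' Set.Ioi 0) := rfl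
  rw [h]
  exact (isOpen_Ioi.preimage (continuous_apply 0)).inter
    ((isOpen_Ioi.preimage (continuous_apply 1)).inter
      (isOpen_Ioi.preimage (continuous_apply 2)))

lemma PP_pos {x : E3} (hx : x ∈ U) : 0 < PP x :=
  mul_pos (mul_pos hx.1 hx.2.1) hx.2.2

lemma feq {x : E3} (hx : x ∈ U) : scalSU3 x = PP x ^ ee * MM x := by
  obtain ⟨h0, h1, h2⟩ := hx
  have hP : (0:ℝ) < x 0 * x 1 * x 2 := mul_pos (mul_pos h0 h1) h2
  have he : ee = 1/3 - 1 := by norm_num [ee]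
  rw [scalSU3, he, PP, MM, Real.rpow_sub hP, Real.rpow_one]
  field_simp
  ring

lemma feqU : U.EqOn scalSU3 (fun x => PP x ^ ee * MM x) := fun _ hx => feq hx

lemma hcoord (i : Fin 3) (x : E3) : HasFDerivAt (fun y : E3 => y i)
    (ContinuousLinearMap.proj i : E3 →L[ℝ] ℝ) x :=
  (ContinuousLinearMap.proj i : E3 →L[ℝ] ℝ).hasFDerivAt

lemma exists_DP (x : E3) : ∃ D : E3 →L[ℝ] ℝ, HasFDerivAt PP D x ∧
    ∀ y, D y = x 1 * x 2 * y 0 + x 0 * x 2 * y 1 + x 0 * x 1 * y 2 :=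
  ⟨_, ((hcoord 0 x).mul (hcoord 1 x)).mul (hcoord 2 x), by intro y; simp; ring⟩

lemma exists_DM (x : E3) : ∃ D : E3 →L[ℝ] ℝ, HasFDerivAt MM D x ∧
    ∀ y, D y = (x 1 + x 2 - 1/3 * x 0) * y 0 + (x 0 + x 2 - 1/3 * x 1) * y 1
      + (x 0 + x 1 - 1/3 * x 2) * y 2 :=
  ⟨_, ((((hcoord 0 x).mul (hcoord 1 x)).add ((hcoord 1 x).mul (hcoord 2 x))).add
      ((hcoord 0 x).mul (hcoord 2 x))).sub
      (((((hcoord 0 x).mul (hcoord 0 x)).add ((hcoord 1 x).mul (hcoord 1 x))).add ((hcoord 2 x).mul (hcoord 2 x))).const_mul (1/6)),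
    by intro y; simp; ring⟩

def Bf (x w : E3) : ℝ := (x 1 + x 2 - 1/3 * x 0) * w 0 + (x 0 + x 2 - 1/3 * x 1) * w 1
  + (x 0 + x 1 - 1/3 * x 2) * w 2

def Cf (x w : E3) : ℝ := x 1 * x 2 * w 0 + x 0 * x 2 * w 1 + x 0 * x 1 * w 2

def Gf (x w : E3) : ℝ := PP x ^ ee * Bf x w + ee * PP x ^ (ee - 1) * MM x * Cf x w

lemma exists_L {x : E3} (hx : x ∈ U) : ∃ L : E3 →L[ℝ] ℝ,
    HasFDerivAt scalSU3 L x ∧ ∀ y, L y = Gf x y := by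
  obtain ⟨DPx, hDP, hDPv⟩ := exists_DP x
  obtain ⟨DMx, hDM, hDMv⟩ := exists_DM x
  have hP0 : PP x ≠ 0 := (PP_pos hx).ne'
  have hA : HasFDerivAt (fun y => PP y ^ ee) ((ee * PP x ^ (ee - 1)) • DPx) x :=
    hDP.rpow_const (Or.inl hP0)
  have hmul := hA.mul hDM
  have hev : scalSU3 =ᶠ[nhds x] fun y => PP y ^ ee * MM y :=
    Filter.eventuallyEq_of_mem (isOpen_U.mem_nhds hx) feqU
  refine ⟨_, hmul.congr_of_eventuallyEq hev, ?_⟩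
  intro y
  simp [hDPv, hDMv, Gf, Bf, Cf, smul_eq_mul]
  ring

lemma exists_L2 {x : E3} (hx : x ∈ U) (w : E3) : ∃ D : E3 →L[ℝ] ℝ,
    HasFDerivAt (fun z => Gf z w) D x ∧ ∀ y, D y =
      ee * PP x ^ (ee - 1) * Cf x y * Bf x w + PP x ^ ee * Bf y w
      + ee * (ee - 1) * PP x ^ (ee - 1 - 1) * Cf x y * MM x * Cf x w
      + ee * PP x ^ (ee - 1) * Bf x y * Cf x w
      + ee * PP x ^ (ee - 1) * MM x *
        ((y 1 * x 2 + x 1 * y 2) * w 0 + (y 0 * x 2 + x 0 * y 2) * w 1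
          + (y 0 * x 1 + x 0 * y 1) * w 2) := by
  obtain ⟨DPx, hDP, hDPv⟩ := exists_DP x
  obtain ⟨DMx, hDM, hDMv⟩ := exists_DM x
  have hP0 : PP x ≠ 0 := (PP_pos hx).ne'
  have hA : HasFDerivAt (fun y => PP y ^ ee) ((ee * PP x ^ (ee - 1)) • DPx) x :=
    hDP.rpow_const (Or.inl hP0)
  have hP1 : HasFDerivAt (fun y => PP y ^ (ee - 1)) (((ee - 1) * PP x ^ (ee - 1 - 1)) • DPx) x :=
    hDP.rpow_const (Or.inl hP0)
  have hlin0 := ((hcoord 1 x).add (hcoord 2 x)).sub ((hcoord 0 x).const_mul (1/3 : ℝ))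
  have hlin1 := ((hcoord 0 x).add (hcoord 2 x)).sub ((hcoord 1 x).const_mul (1/3 : ℝ))
  have hlin2 := ((hcoord 0 x).add (hcoord 1 x)).sub ((hcoord 2 x).const_mul (1/3 : ℝ))
  have hBw := ((hlin0.mul_const (w 0)).add (hlin1.mul_const (w 1))).add (hlin2.mul_const (w 2))
  have hCw := ((((hcoord 1 x).mul (hcoord 2 x)).mul_const (w 0)).add
      (((hcoord 0 x).mul (hcoord 2 x)).mul_const (w 1))).add
      (((hcoord 0 x).mul (hcoord 1 x)).mul_const (w 2))
  have total := (hA.mul hBw).add (((hP1.const_mul ee).mul hDM).mul hCw)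
  refine ⟨_, total, ?_⟩
  intro y
  simp [hDPv, hDMv, Bf, Cf, smul_eq_mul]
  ring

lemma grad_eq {x : E3} (hx : x ∈ U) (w : E3) : fderiv ℝ scalSU3 x w = Gf x w := by
  obtain ⟨L, hL, hLv⟩ := exists_L hx
  rw [hL.fderiv]; exact hLv w

lemma contDiffAt_scal {x : E3} (hx : x ∈ U) : ContDiffAt ℝ 2 scalSU3 x := by
  have h0 : ContDiff ℝ 2 fun y : E3 => y 0 := (ContinuousLinearMap.proj 0 : E3 →L[ℝ] ℝ).contDiff
  have h1 : ContDiff ℝ 2 fun y : E3 => y 1 := (ContinuousLinearMap.proj 1 : E3 →L[ℝ] ℝ).contDiff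
  have h2 : ContDiff ℝ 2 fun y : E3 => y 2 := (ContinuousLinearMap.proj 2 : E3 →L[ℝ] ℝ).contDiff
  have hP : ContDiff ℝ 2 PP := (h0.mul h1).mul h2
  have hM : ContDiff ℝ 2 MM :=
    (((h0.mul h1).add (h1.mul h2)).add (h0.mul h2)).sub
      (contDiff_const.mul (((h0.mul h0).add (h1.mul h1)).add (h2.mul h2)))
  have hrpow : ContDiffAt ℝ 2 (fun y => PP y ^ ee) x :=
    hP.contDiffAt.rpow_const_of_ne (PP_pos hx).ne'
  have hev : scalSU3 =ᶠ[nhds x] fun y => PP y ^ ee * MM y :=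
    Filter.eventuallyEq_of_mem (isOpen_U.mem_nhds hx) feqU
  exact (hrpow.mul hM.contDiffAt).congr_of_eventuallyEq hev

lemma hess_eq {c : ℝ} (hc : 0 < c) (hc3 : c ^ 3 = 1/2) (v w : E3) :
    hessSU3 ![c, c, 2*c] v w =
      (5*v 0*w 0 + 5*v 1*w 1 - v 2*w 2 - 7*(v 0*w 1 + v 1*w 0)
        + (v 0*w 2 + v 2*w 0) + (v 1*w 2 + v 2*w 1)) / 9 := by
  set p : E3 := ![c, c, 2*c] with hp
  have h0 : p 0 = c := rfl
  have h1 : p 1 = c := rfl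
  have h2 : p 2 = 2*c := rfl
  have hpU : p ∈ U := ⟨h0 ▸ hc, h1 ▸ hc, h2 ▸ (by positivity)⟩
  have hPP1 : PP p = 1 := by
    rw [PP, h0, h1, h2]; linear_combination 2 * hc3
  have hdiff : DifferentiableAt ℝ (fderiv ℝ scalSU3) p :=
    ((contDiffAt_scal hpU).fderiv_right (le_refl 2)).differentiableAt one_ne_zero
  have key : hessSU3 p v w = fderiv ℝ (fderiv ℝ scalSU3) p v w := by
    rw [hessSU3, iteratedFDeriv_two_apply]
    norm_num
  have happ : fderiv ℝ (fun x => fderiv ℝ scalSU3 x w) p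
      = (fderiv ℝ (fderiv ℝ scalSU3) p).flip w := by
    rw [fderiv_clm_apply hdiff (differentiableAt_const w)]
    simp
  have hev2 : (fun x => fderiv ℝ scalSU3 x w) =ᶠ[nhds p] (fun x => Gf x w) :=
    Filter.eventuallyEq_of_mem (isOpen_U.mem_nhds hpU) (fun x hx => grad_eq hx w)
  obtain ⟨D, hD, hDv⟩ := exists_L2 hpU w
  have hsnd : fderiv ℝ (fun x => fderiv ℝ scalSU3 x w) p = D := by
    rw [hev2.fderiv_eq]; exact hD.fderiv
  have : hessSU3 p v w = D v := by
    rw [key, ← ContinuousLinearMap.flip_apply, ← happ, hsnd]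
  rw [this, hDv v]
  rw [hPP1]
  simp only [Real.one_rpow, MM, Bf, Cf, ee, h0, h1, h2]
  linear_combination ((160*c^3/9 + 16/9)*(v 0*w 0) + (160*c^3/9 - 32/9)*(v 0*w 1)
    + (80*c^3/9 - 16/9)*(v 0*w 2) + (160*c^3/9 - 32/9)*(v 1*w 0)
    + (160*c^3/9 + 16/9)*(v 1*w 1) + (80*c^3/9 - 16/9)*(v 1*w 2)
    + (80*c^3/9 - 16/9)*(v 2*w 0) + (80*c^3/9 - 16/9)*(v 2*w 1)
    + (40*c^3/9 + 4/9)*(v 2*w 2)) * hc3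

lemma crit {c : ℝ} (hc : 0 < c) (hc3 : c ^ 3 = 1/2) :
    HasFDerivAt scalSU3 (0 : E3 →L[ℝ] ℝ) ![c, c, 2*c] := by
  set p : E3 := ![c, c, 2*c] with hp
  have h0 : p 0 = c := rfl
  have h1 : p 1 = c := rfl
  have h2 : p 2 = 2*c := rfl
  have hpU : p ∈ U := ⟨h0 ▸ hc, h1 ▸ hc, h2 ▸ (by positivity)⟩
  have hPP1 : PP p = 1 := by
    rw [PP, h0, h1, h2]; linear_combination 2 * hc3
  obtain ⟨L, hL, hLv⟩ := exists_L hpU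
  have hL0 : L = 0 := by
    ext y
    rw [ContinuousLinearMap.zero_apply, hLv y, Gf, hPP1]
    simp only [Real.one_rpow, Bf, Cf, MM, ee, h0, h1, h2]
    linear_combination (-(16*c/3)*(y 0 + y 1) - (8*c/3)*(y 2)) * hc3
  exact hL0 ▸ hL

end KE

open KE in
/-- the Kähler–Einstein metric `p = (c, c, 2c)`, `c = (1/3)·(27/2)^{1/3}`, on
`SU(3)/T²` has unit volume, is a critical point of the normalized scalar curvature `f`, and
the second derivative of `f` at `p` has kernel exactly `ℝ·p` and, counted with multiplicity,
exactly one positive and exactly one negative eigenvalue (maximal positive-definite and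
negative-definite subspaces are 1-dimensional). In particular it has coindex `1`. -/
theorem KE_SU3_coindex_one :
    ∀ c : ℝ, c = (1 / 3) * (27 / 2 : ℝ) ^ ((1 : ℝ) / 3) →
    ∀ p : Fin 3 → ℝ, p = ![c, c, 2 * c] →
    (p 0 * p 1 * p 2 = 1) ∧
    HasFDerivAt scalSU3 (0 : (Fin 3 → ℝ) →L[ℝ] ℝ) p ∧
    ContDiffAt ℝ 2 scalSU3 p ∧
    (∀ v : Fin 3 → ℝ, (∀ w : Fin 3 → ℝ, hessSU3 p v w = 0) ↔ ∃ t : ℝ, v = t • p) ∧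
    (∃ v : Fin 3 → ℝ, 0 < hessSU3 p v v) ∧
    (∀ W : Submodule ℝ (Fin 3 → ℝ), (∀ v ∈ W, v ≠ 0 → 0 < hessSU3 p v v) →
      Module.finrank ℝ W ≤ 1) ∧
    (∃ v : Fin 3 → ℝ, hessSU3 p v v < 0) ∧
    (∀ W : Submodule ℝ (Fin 3 → ℝ), (∀ v ∈ W, v ≠ 0 → hessSU3 p v v < 0) →
      Module.finrank ℝ W ≤ 1) := by
  intro c hcdef p hpdef
  subst hpdef
  have hc : 0 < c := by
    rw [hcdef]
    have := Real.rpow_pos_of_pos (by norm_num : (0:ℝ) < 27/2) ((1:ℝ)/3)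
    linarith
  have hc3 : c ^ 3 = 1/2 := by
    have h : (((27:ℝ)/2) ^ ((1:ℝ)/3)) ^ (3:ℕ) = 27/2 := by
      rw [← Real.rpow_natCast (((27:ℝ)/2) ^ ((1:ℝ)/3)) 3, ← Real.rpow_mul (by norm_num)]
      norm_num
    rw [hcdef, mul_pow, h]
    norm_num
  have h0 : (![c, c, 2*c] : E3) 0 = c := rfl
  have h1 : (![c, c, 2*c] : E3) 1 = c := rfl
  have h2 : (![c, c, 2*c] : E3) 2 = 2*c := rfl
  have hq := hess_eq hc hc3
  refine ⟨?_, crit hc hc3, contDiffAt_scal ⟨h0 ▸ hc, h1 ▸ hc, h2 ▸ (mul_pos two_pos hc)⟩,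
    ?_, ?_, ?_, ?_, ?_⟩
  · rw [h0, h1, h2]; linear_combination 2 * hc3
  · -- kernel
    intro v
    constructor
    · intro h
      have e0 := h ![1, 0, 0]
      have e1 := h ![0, 1, 0]
      rw [hq] at e0 e1
      norm_num [Matrix.cons_val_two] at e0 e1
      have hv1 : v 1 = v 0 := by linarith
      have hv2 : v 2 = 2 * v 0 := by linarith
      refine ⟨v 0 / c, ?_⟩
      funext i
      fin_cases i
      · show v 0 = v 0 / c * c
        field_simp
      · show v 1 = v 0 / c * c
        rw [hv1]; field_simp
      · show v 2 = v 0 / c * (2 * c)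
        rw [hv2]; field_simp
    · rintro ⟨t, rfl⟩ w
      rw [hq]
      simp only [Pi.smul_apply, smul_eq_mul, h0, h1, h2]
      ring
  · exact ⟨![1, -1, 0], by rw [hq]; norm_num [Matrix.cons_val_two]⟩
  · -- positive-definite subspaces have dim ≤ 1
    intro W hW
    set φ : W →ₗ[ℝ] ℝ :=
      ((LinearMap.proj 0 : E3 →ₗ[ℝ] ℝ) - (LinearMap.proj 1 : E3 →ₗ[ℝ] ℝ)).comp W.subtype with hφ
    by_cases hinj : Function.Injective φ
    · simpa using LinearMap.finrank_le_finrank_of_injective hinj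
    · exfalso
      rw [← LinearMap.ker_eq_bot] at hinj
      obtain ⟨b, hbk, hbne⟩ := Submodule.exists_mem_ne_zero_of_ne_bot hinj
      have hb0 : (b : E3) 0 - (b : E3) 1 = 0 := by
        have := (LinearMap.mem_ker).mp hbk
        simpa [hφ] using this
      have hvne : (b : E3) ≠ 0 := fun hh => hbne (Subtype.ext hh)
      have hpos := hW (b : E3) b.2 hvne
      rw [hq] at hpos
      have hb1 : (b : E3) 1 = (b : E3) 0 := by linarith
      rw [hb1] at hpos
      nlinarith [sq_nonneg (2 * (b : E3) 0 - (b : E3) 2)]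
  · exact ⟨![1, 1, -1], by rw [hq]; norm_num [Matrix.cons_val_two]⟩
  · -- negative-definite subspaces have dim ≤ 1
    intro W hW
    set φ : W →ₗ[ℝ] ℝ :=
      (((LinearMap.proj 0 : E3 →ₗ[ℝ] ℝ) + (LinearMap.proj 1 : E3 →ₗ[ℝ] ℝ))
        - (LinearMap.proj 2 : E3 →ₗ[ℝ] ℝ)).comp W.subtype with hφ
    by_cases hinj : Function.Injective φ
    · simpa using LinearMap.finrank_le_finrank_of_injective hinj
    · exfalso
      rw [← LinearMap.ker_eq_bot] at hinj
      obtain ⟨b, hbk, hbne⟩ := Submodule.exists_mem_ne_zero_of_ne_bot hinj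
      have hb0 : (b : E3) 0 + (b : E3) 1 - (b : E3) 2 = 0 := by
        have := (LinearMap.mem_ker).mp hbk
        simpa [hφ] using this
      have hvne : (b : E3) ≠ 0 := fun hh => hbne (Subtype.ext hh)
      have hneg := hW (b : E3) b.2 hvne
      rw [hq] at hneg
      have hb2 : (b : E3) 2 = (b : E3) 0 + (b : E3) 1 := by linarith
      rw [hb2] at hneg
      nlinarith [sq_nonneg ((b : E3) 0 - (b : E3) 1)]
end
end
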